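/- arXiv:1707.08393 — 4 statements merged into one kernel-verified Lean document; each statement's English description precedes it below -/
import Mathlib

section
/- For every a ∈ I and every n ≥ 1, (1/2)·v_{N(n)}(1) ≤ sup_{y ∈ I} | G_{N,a}({x ∈ I : s_{n,a}(x) ∈ [0,y]}) − G_N([0,y]) |, where v_{N(n)}(1) = (1+N)·N^{n+1}/(q̃_{n+1}·q̃_{n+2}) and the sequence q̃ is defined by q̃_{−1}=0, q̃_0=1 and q̃_k = N(q̃_{k−1}+q̃_{k−2}) for k ≥ 1. -/
open MeasureTheory Set Filter
open scoped Classical Topology ENNReal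

/-- The N-continued fraction transformation `T_N x = N/x - ⌊N/x⌋` (with `T_N 0 = 0`). -/
noncomputable def TN (N : ℕ) (x : ℝ) : ℝ := (N : ℝ) / x - ⌊(N : ℝ) / x⌋

/-- `digit N x k` is the (k+1)-st N-continued fraction digit `a_{k+1}(x) = ⌊N / T_N^k(x)⌋`. -/
noncomputable def digit (N : ℕ) (x : ℝ) (k : ℕ) : ℕ := ⌊(N : ℝ) / (TN N)^[k] x⌋₊

/-- The invariant (Gauss-type) measure `G_N(A) = (1/log((N+1)/N)) ∫_A dx/(x+N)` on `I = [0,1]`. -/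
noncomputable def GN (N : ℕ) : Measure ℝ :=
  (volume.restrict (Icc (0:ℝ) 1)).withDensity
    (fun x => ENNReal.ofReal ((Real.log ((N+1)/N))⁻¹ * (x + N)⁻¹))

/-- The conditional measure `G_{N,a}` with distribution function `(N+a)x/(ax+N)` on `[0,1]`,
i.e. with density `N(N+a)/(ax+N)²` with respect to Lebesgue measure on `[0,1]`. -/
noncomputable def GNa (N : ℕ) (a : ℝ) : Measure ℝ :=
  (volume.restrict (Icc (0:ℝ) 1)).withDensity
    (fun x => ENNReal.ofReal ((N : ℝ) * (N + a) / (a * x + N) ^ 2))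

/-- `sSeq N a x n = s_{n,a}(x)`: `s_{0,a} = a`, `s_{n,a} = N/(s_{n-1,a} + a_n(x))`. -/
noncomputable def sSeq (N : ℕ) (a x : ℝ) : ℕ → ℝ
  | 0 => a
  | (n+1) => (N : ℝ) / (sSeq N a x n + (digit N x n : ℝ))

/-- The sequence `q̃`, shifted: `qt N (k+1) = q̃_k` where `q̃_{-1}=0`, `q̃_0=1`,
`q̃_k = N(q̃_{k-1}+q̃_{k-2})`. -/
noncomputable def qt (N : ℕ) : ℕ → ℝ
  | 0 => 0
  | 1 => 1
  | (k+2) => (N : ℝ) * (qt N (k+1) + qt N k)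

lemma qt_nonneg (N : ℕ) : ∀ k, 0 ≤ qt N k
  | 0 => by simp [qt]
  | 1 => by simp [qt]
  | (k+2) => by
      have h1 := qt_nonneg N (k+1)
      have h0 := qt_nonneg N k
      simp only [qt]; positivity

lemma qt_pos (N : ℕ) (hN : 1 ≤ N) : ∀ k, 0 < qt N (k+1)
  | 0 => by simp [qt]
  | (k+1) => by
      have h1 := qt_pos N hN k
      have h0 := qt_nonneg N k
      have hN1 : (1:ℝ) ≤ N := by exact_mod_cast hN
      simp only [qt]; nlinarith

lemma qt_det (N : ℕ) : ∀ k, qt N (k+1)^2 - qt N k * qt N (k+2) = (-(N:ℝ))^k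
  | 0 => by simp [qt]
  | (k+1) => by
      have ih := qt_det N k
      have h2 : qt N (k+2) = (N:ℝ) * (qt N (k+1) + qt N k) := by simp [qt]
      have h3 : qt N (k+3) = (N:ℝ) * (qt N (k+2) + qt N (k+1)) := by simp [qt]
      rw [pow_succ]
      linear_combination (-(N:ℝ)) * ih + qt N (k+2) * h2 - qt N (k+1) * h3

/-- endpoints of the all-`N` cylinder. -/
noncomputable def uu (N : ℕ) (k : ℕ) : ℝ := (N:ℝ) * qt N k / qt N (k+1)

lemma uu_nonneg (N : ℕ) (hN : 1 ≤ N) (k : ℕ) : 0 ≤ uu N k :=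
  div_nonneg (mul_nonneg (Nat.cast_nonneg N) (qt_nonneg N k)) (qt_pos N hN k).le

lemma uu_le_one (N : ℕ) (hN : 1 ≤ N) (k : ℕ) : uu N k ≤ 1 := by
  rw [uu, div_le_one (qt_pos N hN k)]
  cases k with
  | zero => simp [qt]
  | succ k =>
    have h1 : qt N (k+2) = (N:ℝ)*(qt N (k+1) + qt N k) := by simp [qt]
    have h2 := qt_nonneg N k
    have h3 := (qt_pos N hN k).le
    have h4 : (0:ℝ) ≤ N := Nat.cast_nonneg N
    rw [h1]; nlinarith

lemma g_uu (N : ℕ) (hN : 1 ≤ N) (k : ℕ) : (N:ℝ)/((N:ℝ) + uu N k) = uu N (k+1) := by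
  have hN1 : (1:ℝ) ≤ N := by exact_mod_cast hN
  have hN0 : (0:ℝ) < N := by linarith
  have hq : 0 < qt N (k+1) := qt_pos N hN k
  have hr : 0 < qt N (k+2) := qt_pos N hN (k+1)
  have h0 : 0 ≤ qt N k := qt_nonneg N k
  have hrec : qt N (k+2) = (N:ℝ) * (qt N (k+1) + qt N k) := by simp [qt]
  simp only [uu]
  have hden : (0:ℝ) < (N:ℝ) + (N:ℝ) * qt N k / qt N (k+1) := by
    have : (0:ℝ) ≤ (N:ℝ) * qt N k / qt N (k+1) := by positivity
    linarith
  rw [div_eq_div_iff hden.ne' hr.ne', hrec]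
  field_simp

lemma between_helper (N : ℕ) (hN : 1 ≤ N) {α β x : ℝ} (hα : 0 ≤ α) (hβ : 0 ≤ β)
    (h1 : min ((N:ℝ)/((N:ℝ)+α)) ((N:ℝ)/((N:ℝ)+β)) < x)
    (h2 : x < max ((N:ℝ)/((N:ℝ)+α)) ((N:ℝ)/((N:ℝ)+β))) :
    0 < x ∧ min α β < (N:ℝ)/x - N ∧ (N:ℝ)/x - N < max α β := by
  have hN1 : (1:ℝ) ≤ N := by exact_mod_cast hN
  have hN0 : (0:ℝ) < N := by linarith
  have hA : (0:ℝ) < (N:ℝ)+α := by linarith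
  have hB : (0:ℝ) < (N:ℝ)+β := by linarith
  have hx0 : 0 < x := (lt_min (div_pos hN0 hA) (div_pos hN0 hB)).trans h1
  refine ⟨hx0, ?_⟩
  rcases le_total α β with h | h
  · have hg : (N:ℝ)/((N:ℝ)+β) ≤ (N:ℝ)/((N:ℝ)+α) := by
      rw [div_le_div_iff₀ hB hA]; nlinarith
    rw [min_eq_right hg] at h1
    rw [max_eq_left hg] at h2
    rw [min_eq_left h, max_eq_right h]
    constructor
    · have e1 : x * ((N:ℝ)+α) < N := (lt_div_iff₀ hA).mp h2
      have e2 : (N:ℝ)+α < N/x := (lt_div_iff₀ hx0).mpr (by nlinarith)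
      linarith
    · have e1 : (N:ℝ) < x * ((N:ℝ)+β) := (div_lt_iff₀ hB).mp h1
      have e2 : (N:ℝ)/x < (N:ℝ)+β := (div_lt_iff₀ hx0).mpr (by nlinarith)
      linarith
  · have hg : (N:ℝ)/((N:ℝ)+α) ≤ (N:ℝ)/((N:ℝ)+β) := by
      rw [div_le_div_iff₀ hA hB]; nlinarith
    rw [min_eq_left hg] at h1
    rw [max_eq_right hg] at h2
    rw [min_eq_right h, max_eq_left h]
    constructor
    · have e1 : x * ((N:ℝ)+β) < N := (lt_div_iff₀ hB).mp h2
      have e2 : (N:ℝ)+β < N/x := (lt_div_iff₀ hx0).mpr (by nlinarith)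
      linarith
    · have e1 : (N:ℝ) < x * ((N:ℝ)+α) := (div_lt_iff₀ hA).mp h1
      have e2 : (N:ℝ)/x < (N:ℝ)+α := (div_lt_iff₀ hx0).mpr (by nlinarith)
      linarith

lemma cyl_digits (N : ℕ) (hN : 1 ≤ N) :
    ∀ k, ∀ x : ℝ, min (uu N k) (uu N (k+1)) < x → x < max (uu N k) (uu N (k+1)) →
      ∀ j, j < k → digit N x j = N
  | 0 => fun x _ _ j hj => absurd hj (Nat.not_lt_zero j)
  | (k+1) => fun x hx1 hx2 j hj => by
      have hN1 : (1:ℝ) ≤ N := by exact_mod_cast hN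
      have hN0 : (0:ℝ) < N := by linarith
      rw [← g_uu N hN k] at hx1 hx2
      rw [← g_uu N hN (k+1)] at hx1 hx2
      obtain ⟨hx0, ht1, ht2⟩ :=
        between_helper N hN (uu_nonneg N hN k) (uu_nonneg N hN (k+1)) hx1 hx2
      have htpos : 0 < (N:ℝ)/x - N :=
        (le_min (uu_nonneg N hN k) (uu_nonneg N hN (k+1))).trans_lt ht1
      have htlt1 : (N:ℝ)/x - N < 1 :=
        ht2.trans_le (max_le (uu_le_one N hN k) (uu_le_one N hN (k+1)))
      match j with
      | 0 =>
        simp only [digit, Function.iterate_zero, id]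
        rw [Nat.floor_eq_iff (by nlinarith : (0:ℝ) ≤ (N:ℝ)/x)]
        constructor
        · linarith
        · push_cast; linarith
      | (j+1) =>
        have hTN : TN N x = (N:ℝ)/x - N := by
          rw [TN]
          have hfl : ⌊(N:ℝ)/x⌋ = (N:ℤ) := by
            rw [Int.floor_eq_iff]
            constructor
            · push_cast; linarith
            · push_cast; linarith
          rw [hfl]; push_cast; ring
        have hstep : digit N x (j+1) = digit N (TN N x) j := by
          simp only [digit, Function.iterate_succ_apply]
        rw [hstep, hTN]
        exact cyl_digits N hN k ((N:ℝ)/x - N) ht1 ht2 j (by omega)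

noncomputable def tA (N : ℕ) (a : ℝ) : ℕ → ℝ
  | 0 => a
  | (k+1) => (N:ℝ) / (tA N a k + N)

lemma tA_mem (N : ℕ) (hN : 1 ≤ N) {a : ℝ} (ha0 : 0 ≤ a) (ha1 : a ≤ 1) :
    ∀ k, 0 ≤ tA N a k ∧ tA N a k ≤ 1
  | 0 => ⟨ha0, ha1⟩
  | (k+1) => by
    obtain ⟨h0, h1⟩ := tA_mem N hN ha0 ha1 k
    have hN1 : (1:ℝ) ≤ N := by exact_mod_cast hN
    have hN0 : (0:ℝ) < N := by linarith
    simp only [tA]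
    constructor
    · positivity
    · rw [div_le_one (by linarith)]; linarith

lemma tA_pos (N : ℕ) (hN : 1 ≤ N) {a : ℝ} (ha0 : 0 ≤ a) (ha1 : a ≤ 1) (k : ℕ) :
    0 < tA N a (k+1) := by
  obtain ⟨h0, h1⟩ := tA_mem N hN ha0 ha1 k
  have hN1 : (1:ℝ) ≤ N := by exact_mod_cast hN
  have hN0 : (0:ℝ) < N := by linarith
  simp only [tA]
  positivity

lemma sSeq_cyl (N : ℕ) (a x : ℝ) (n : ℕ) (hdig : ∀ j, j < n → digit N x j = N) :
    ∀ k, k ≤ n → sSeq N a x k = tA N a k := by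
  intro k
  induction k with
  | zero => intro _; rfl
  | succ k ih =>
    intro hk
    have h1 := ih (by omega)
    have h2 := hdig k (by omega)
    simp only [sSeq, tA, h1, h2]

lemma GNa_Ioo (N : ℕ) (hN : 1 ≤ N) {a l r : ℝ} (ha0 : 0 ≤ a)
    (hl : 0 ≤ l) (hlr : l ≤ r) (hr : r ≤ 1) :
    GNa N a (Ioo l r) =
      ENNReal.ofReal (((N:ℝ)+a)*r/(a*r+N) - ((N:ℝ)+a)*l/(a*l+N)) := by
  have hN1 : (1:ℝ) ≤ N := by exact_mod_cast hN
  have hN0 : (0:ℝ) < N := by linarith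
  have hNa : (0:ℝ) ≤ (N:ℝ) + a := by linarith
  have hden : ∀ x : ℝ, 0 ≤ x → (0:ℝ) < a*x+N := by
    intro x hx; nlinarith
  have hsub : Ioo l r ⊆ Icc (0:ℝ) 1 := fun x hx => ⟨hl.trans hx.1.le, hx.2.le.trans hr⟩
  have hcont : ContinuousOn (fun x : ℝ => (N:ℝ)*((N:ℝ)+a)/(a*x+N)^2) (Icc l r) := by
    apply ContinuousOn.div continuousOn_const
    · fun_prop
    · intro x hx
      have := hden x (hl.trans hx.1)
      positivity
  have hInt : IntegrableOn (fun x : ℝ => (N:ℝ)*((N:ℝ)+a)/(a*x+N)^2) (Ioo l r) :=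
    (hcont.integrableOn_Icc).mono_set Ioo_subset_Icc_self
  rw [GNa, withDensity_apply _ measurableSet_Ioo,
      Measure.restrict_restrict measurableSet_Ioo,
      inter_eq_self_of_subset_left hsub]
  rw [← MeasureTheory.ofReal_integral_eq_lintegral_ofReal hInt
      (Eventually.of_forall (fun x => by
        have : (0:ℝ) ≤ (a*x+N)^2 := sq_nonneg _
        positivity))]
  congr 1
  rw [← MeasureTheory.integral_Ioc_eq_integral_Ioo, ← intervalIntegral.integral_of_le hlr]
  have hderiv : ∀ x ∈ uIcc l r,
      HasDerivAt (fun x => ((N:ℝ)+a)*x/(a*x+N)) ((N:ℝ)*((N:ℝ)+a)/(a*x+N)^2) x := by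
    intro x hx
    rw [uIcc_of_le hlr] at hx
    have hd0 : a*x+(N:ℝ) ≠ 0 := (hden x (hl.trans hx.1)).ne'
    have h1 : HasDerivAt (fun x : ℝ => ((N:ℝ)+a)*x) ((N:ℝ)+a) x := by
      simpa using (hasDerivAt_id x).const_mul ((N:ℝ)+a)
    have h2 : HasDerivAt (fun x : ℝ => a*x+(N:ℝ)) a x := by
      simpa using ((hasDerivAt_id x).const_mul a).add_const (N:ℝ)
    have h3 := h1.div h2 hd0
    refine h3.congr_deriv ?_
    ring
  have hIcont : ContinuousOn (fun x : ℝ => (N:ℝ)*((N:ℝ)+a)/(a*x+N)^2) (uIcc l r) := by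
    rw [uIcc_of_le hlr]; exact hcont
  rw [intervalIntegral.integral_eq_sub_of_hasDerivAt hderiv hIcont.intervalIntegrable]

lemma GNa_le (N : ℕ) (hN : 1 ≤ N) {a : ℝ} (ha0 : 0 ≤ a) (s : Set ℝ) :
    GNa N a s ≤ ENNReal.ofReal (((N:ℝ)+a)/N) := by
  have hN1 : (1:ℝ) ≤ N := by exact_mod_cast hN
  have hN0 : (0:ℝ) < N := by linarith
  refine (measure_mono (subset_univ s)).trans ?_
  rw [GNa, withDensity_apply _ MeasurableSet.univ, Measure.restrict_univ]
  calc ∫⁻ x, ENNReal.ofReal ((N : ℝ) * (N + a) / (a * x + N) ^ 2)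
        ∂(volume.restrict (Icc (0:ℝ) 1))
      ≤ ∫⁻ _, ENNReal.ofReal (((N:ℝ)+a)/N) ∂(volume.restrict (Icc (0:ℝ) 1)) := by
        apply lintegral_mono_ae
        filter_upwards [ae_restrict_mem measurableSet_Icc] with x hx
        apply ENNReal.ofReal_le_ofReal
        have hx0 : 0 ≤ x := hx.1
        have hd : (0:ℝ) < a*x+N := by nlinarith
        rw [div_le_div_iff₀ (by positivity) hN0]
        nlinarith [mul_nonneg ha0 hx0, mul_nonneg (mul_nonneg ha0 hx0) hN0.le,
          sq_nonneg (a*x)]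
    _ = ENNReal.ofReal (((N:ℝ)+a)/N) * (volume.restrict (Icc (0:ℝ) 1)) univ :=
        lintegral_const _
    _ = ENNReal.ofReal (((N:ℝ)+a)/N) := by
        rw [Measure.restrict_apply_univ, Real.volume_Icc]
        norm_num

lemma GN_upper (N : ℕ) (hN : 1 ≤ N) {s : Set ℝ} (hs : MeasurableSet s) :
    GN N s ≤ ENNReal.ofReal ((Real.log (((N:ℝ)+1)/N))⁻¹ * (N:ℝ)⁻¹) * volume s := by
  have hN1 : (1:ℝ) ≤ N := by exact_mod_cast hN
  have hN0 : (0:ℝ) < N := by linarith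
  have hlog : 0 ≤ (Real.log (((N:ℝ)+1)/N))⁻¹ := by
    apply inv_nonneg.mpr
    apply Real.log_nonneg
    rw [le_div_iff₀ hN0]; linarith
  rw [GN, withDensity_apply _ hs, Measure.restrict_restrict hs]
  calc ∫⁻ x in s ∩ Icc (0:ℝ) 1,
        ENNReal.ofReal ((Real.log ((N+1)/N))⁻¹ * (x + N)⁻¹) ∂volume
      ≤ ∫⁻ _ in s ∩ Icc (0:ℝ) 1,
          ENNReal.ofReal ((Real.log (((N:ℝ)+1)/N))⁻¹ * (N:ℝ)⁻¹) ∂volume := by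
        apply lintegral_mono_ae
        filter_upwards [ae_restrict_mem (hs.inter measurableSet_Icc)] with x hx
        apply ENNReal.ofReal_le_ofReal
        apply mul_le_mul_of_nonneg_left _ hlog
        have hx0 : 0 ≤ x := hx.2.1
        exact inv_anti₀ hN0 (by linarith)
    _ = ENNReal.ofReal ((Real.log (((N:ℝ)+1)/N))⁻¹ * (N:ℝ)⁻¹) * volume (s ∩ Icc (0:ℝ) 1) :=
        setLIntegral_const _ _
    _ ≤ _ := mul_le_mul_right (measure_mono inter_subset_left) _


set_option maxHeartbeats 2000000

/-- For every `a ∈ I` and `n ≥ 1`,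
`(1/2) v_{N(n)}(1) ≤ sup_{y ∈ I} |G_{N,a}(s_{n,a} ∈ [0,y]) − G_N([0,y])|`, where
`v_{N(n)}(1) = (1+N) N^{n+1}/(q̃_{n+1} q̃_{n+2})`. -/
theorem lower_bound_one_dim (N : ℕ) (hN : 1 ≤ N) (a : ℝ) (ha : a ∈ Icc (0:ℝ) 1)
    (n : ℕ) (hn : 1 ≤ n) :
    (1/2) * ((1 + N) * (N : ℝ) ^ (n+1) / (qt N (n+2) * qt N (n+3))) ≤
      ⨆ y : Icc (0:ℝ) 1,
        |(GNa N a {x ∈ Icc (0:ℝ) 1 | sSeq N a x n ∈ Icc (0:ℝ) y}).toReal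
          - (GN N (Icc (0:ℝ) y)).toReal| := by
  obtain ⟨ha0, ha1⟩ := ha
  have hN1 : (1:ℝ) ≤ N := by exact_mod_cast hN
  have hN0 : (0:ℝ) < N := by linarith
  have hNa : (0:ℝ) ≤ (N:ℝ) + a := by linarith
  -- qt abbreviations
  have hp : 0 ≤ qt N n := qt_nonneg N n
  have hq : 0 < qt N (n+1) := qt_pos N hN n
  have hr : 0 < qt N (n+2) := qt_pos N hN (n+1)
  have hs : 0 < qt N (n+3) := qt_pos N hN (n+2)
  have hrec_r : qt N (n+2) = (N:ℝ) * (qt N (n+1) + qt N n) := by simp [qt]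
  have hrec_s : qt N (n+3) = (N:ℝ) * (qt N (n+2) + qt N (n+1)) := by simp [qt]
  -- the common value of s_{n,a} on the cylinder
  set t : ℝ := tA N a n with htdef
  have htmem := tA_mem N hN ha0 ha1 n
  have ht0 : 0 ≤ t := htmem.1
  have ht1 : t ≤ 1 := htmem.2
  have htpos : 0 < t := by
    obtain ⟨m, rfl⟩ : ∃ m, n = m + 1 := ⟨n - 1, by omega⟩
    exact tA_pos N hN ha0 ha1 m
  -- cylinder endpoints
  set xm : ℝ := min (uu N n) (uu N (n+1)) with hxm
  set xp : ℝ := max (uu N n) (uu N (n+1)) with hxp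
  have hu0 : 0 ≤ uu N n := uu_nonneg N hN n
  have hu0' : 0 ≤ uu N (n+1) := uu_nonneg N hN (n+1)
  have hu1 : uu N n ≤ 1 := uu_le_one N hN n
  have hu1' : uu N (n+1) ≤ 1 := uu_le_one N hN (n+1)
  have hxm0 : 0 ≤ xm := le_min hu0 hu0'
  have hxp1 : xp ≤ 1 := max_le hu1 hu1'
  -- length of the cylinder
  have hdet := qt_det N n
  have hd : uu N n - uu N (n+1) = -((N:ℝ) * (-(N:ℝ))^n) / (qt N (n+1) * qt N (n+2)) := by
    have h1 : uu N n - uu N (n+1)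
        = ((N:ℝ)*(qt N n * qt N (n+2) - qt N (n+1)^2))/(qt N (n+1) * qt N (n+2)) := by
      simp only [uu]; field_simp
    rw [h1]
    congr 1
    linear_combination (-(N:ℝ)) * hdet
  have hdiffabs : xp - xm = (N:ℝ)^(n+1) / (qt N (n+1) * qt N (n+2)) := by
    rw [hxp, hxm, max_sub_min_eq_abs, abs_sub_comm, hd, abs_div, abs_neg, abs_mul, abs_pow, abs_neg,
      abs_of_pos hN0, abs_of_pos (mul_pos hq hr), pow_succ]
    ring
  have hxlt : xm < xp := by
    have hpos : 0 < (N:ℝ)^(n+1) / (qt N (n+1) * qt N (n+2)) := by positivity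
    linarith
  -- measure of the cylinder
  have hdm : (0:ℝ) < a*xm+N := by nlinarith
  have hdp : (0:ℝ) < a*xp+N := by nlinarith [hxm0.trans hxlt.le]
  have hcylmeas : (GNa N a (Ioo xm xp)).toReal
      = (N:ℝ)*((N:ℝ)+a)*(xp-xm)/((a*xm+N)*(a*xp+N)) := by
    rw [GNa_Ioo N hN ha0 hxm0 hxlt.le hxp1]
    have heq : ((N:ℝ)+a)*xp/(a*xp+N) - ((N:ℝ)+a)*xm/(a*xm+N)
        = (N:ℝ)*((N:ℝ)+a)*(xp-xm)/((a*xm+N)*(a*xp+N)) := by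
      field_simp
      ring
    rw [heq, ENNReal.toReal_ofReal]
    apply div_nonneg
    · have : 0 ≤ xp - xm := by linarith
      positivity
    · positivity
  have hprod : (a*xm+N)*(a*xp+N) = (a*uu N n+N)*(a*uu N (n+1)+N) := by
    rcases le_total (uu N n) (uu N (n+1)) with h|h
    · rw [hxm, hxp, min_eq_left h, max_eq_right h]
    · rw [hxm, hxp, min_eq_right h, max_eq_left h]; ring
  -- key lower bound on the cylinder measure
  have hApos : 0 < a * qt N n + qt N (n+1) := by nlinarith
  have hBpos : 0 < a * qt N (n+1) + qt N (n+2) := by nlinarith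
  have hkey : (1+(N:ℝ))*(N:ℝ)^(n+1)/(qt N (n+2)*qt N (n+3))
      ≤ (GNa N a (Ioo xm xp)).toReal := by
    rw [hcylmeas, hdiffabs, hprod]
    have huun : a * uu N n + (N:ℝ) = ((N:ℝ)*(a*qt N n + qt N (n+1)))/(qt N (n+1)) := by
      simp only [uu]; field_simp
    have huun1 : a * uu N (n+1) + (N:ℝ)
        = ((N:ℝ)*(a*qt N (n+1) + qt N (n+2)))/(qt N (n+2)) := by
      simp only [uu]; field_simp
    rw [huun, huun1]
    have hμeq : (N:ℝ)*((N:ℝ)+a)*((N:ℝ)^(n+1)/(qt N (n+1)*qt N (n+2)))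
          / ((((N:ℝ)*(a*qt N n + qt N (n+1)))/(qt N (n+1)))
            * (((N:ℝ)*(a*qt N (n+1) + qt N (n+2)))/(qt N (n+2))))
        = ((N:ℝ)+a)*(N:ℝ)^(n+1)
          / ((N:ℝ)*((a*qt N n + qt N (n+1))*(a*qt N (n+1) + qt N (n+2)))) := by
      field_simp
    rw [hμeq]
    rw [div_le_div_iff₀ (by positivity) (by positivity)]
    -- certificate
    have hcert : ((N:ℝ)+a)*(qt N (n+1)+qt N n)*qt N (n+3)
          - (1+(N:ℝ))*(a*qt N n+qt N (n+1))*(a*qt N (n+1)+qt N (n+2))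
        = (1-a)*(N:ℝ)*(qt N (n+1)+qt N n)
            *((N:ℝ)^2*qt N (n+1)+(N:ℝ)^2*qt N n-qt N (n+1))
          + a*((N:ℝ)+1)*(qt N n+qt N (n+1))*((N:ℝ)-1)
            *((N:ℝ)*(qt N (n+1)+qt N n)+qt N (n+1))
          + (1+(N:ℝ))*qt N n*qt N (n+1)*a*(1-a) := by
      rw [hrec_s, hrec_r]; ring
    have hsq : (1:ℝ) ≤ (N:ℝ)^2 := by nlinarith
    have ht1' : 0 ≤ (1-a)*(N:ℝ)*(qt N (n+1)+qt N n)
        *((N:ℝ)^2*qt N (n+1)+(N:ℝ)^2*qt N n-qt N (n+1)) := by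
      apply mul_nonneg (mul_nonneg (mul_nonneg (by linarith) hN0.le) (by linarith))
      nlinarith [mul_le_mul_of_nonneg_right hsq hq.le, mul_nonneg (sq_nonneg (N:ℝ)) hp]
    have ht2' : 0 ≤ a*((N:ℝ)+1)*(qt N n+qt N (n+1))*((N:ℝ)-1)
        *((N:ℝ)*(qt N (n+1)+qt N n)+qt N (n+1)) := by
      apply mul_nonneg (mul_nonneg (mul_nonneg (mul_nonneg ha0 (by linarith))
        (by linarith)) (by linarith))
      nlinarith
    have ht3' : 0 ≤ (1+(N:ℝ))*qt N n*qt N (n+1)*a*(1-a) := by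
      apply mul_nonneg (mul_nonneg (mul_nonneg (mul_nonneg (by linarith) hp) hq.le) ha0)
      linarith
    have h0 : (1+(N:ℝ))*(a*qt N n+qt N (n+1))*(a*qt N (n+1)+qt N (n+2))
        ≤ ((N:ℝ)+a)*(qt N (n+1)+qt N n)*qt N (n+3) := by linarith
    calc (1+(N:ℝ))*(N:ℝ)^(n+1)
          * ((N:ℝ)*((a*qt N n + qt N (n+1))*(a*qt N (n+1) + qt N (n+2))))
        = ((N:ℝ)^(n+1)*(N:ℝ))
          * ((1+(N:ℝ))*(a*qt N n+qt N (n+1))*(a*qt N (n+1)+qt N (n+2))) := by ring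
      _ ≤ ((N:ℝ)^(n+1)*(N:ℝ))
          * (((N:ℝ)+a)*(qt N (n+1)+qt N n)*qt N (n+3)) := by
          apply mul_le_mul_of_nonneg_left h0 (by positivity)
      _ = ((N:ℝ)+a)*(N:ℝ)^(n+1) * (qt N (n+2)*qt N (n+3)) := by
          rw [hrec_r]; ring
  -- value of s_{n,a} on the cylinder
  have hcyl_s : ∀ x ∈ Ioo xm xp, sSeq N a x n = t := by
    intro x hx
    have hdig := cyl_digits N hN n x (hxm ▸ hx.1) (hxp ▸ hx.2)
    exact sSeq_cyl N a x n hdig n le_rfl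
  -- the normalizing constant for G_N
  set C0 : ℝ := (Real.log (((N:ℝ)+1)/N))⁻¹ * (N:ℝ)⁻¹ with hC0def
  have hC0 : 0 ≤ C0 := by
    apply mul_nonneg _ (by positivity)
    apply inv_nonneg.mpr
    apply Real.log_nonneg
    rw [le_div_iff₀ hN0]; linarith
  -- finiteness and boundedness facts
  have hνfin : ∀ u : Set ℝ, GNa N a u ≠ ⊤ := fun u =>
    ((GNa_le N hN ha0 u).trans_lt ENNReal.ofReal_lt_top).ne
  have hGbd : ∀ y : ℝ, 0 ≤ y → y ≤ 1 → GN N (Icc (0:ℝ) y) ≤ ENNReal.ofReal C0 := by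
    intro y h0 h1
    calc GN N (Icc (0:ℝ) y) ≤ ENNReal.ofReal C0 * volume (Icc (0:ℝ) y) :=
          GN_upper N hN measurableSet_Icc
      _ = ENNReal.ofReal C0 * ENNReal.ofReal (y - 0) := by rw [Real.volume_Icc]
      _ = ENNReal.ofReal (C0 * (y - 0)) := (ENNReal.ofReal_mul hC0).symm
      _ ≤ ENNReal.ofReal C0 := by
          apply ENNReal.ofReal_le_ofReal
          rw [sub_zero]
          calc C0 * y ≤ C0 * 1 := mul_le_mul_of_nonneg_left h1 hC0
            _ = C0 := mul_one C0
  have hGfin : ∀ y : ℝ, 0 ≤ y → y ≤ 1 → GN N (Icc (0:ℝ) y) ≠ ⊤ := fun y h0 h1 =>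
    ((hGbd y h0 h1).trans_lt ENNReal.ofReal_lt_top).ne
  have habs : ∀ A B : ℝ, |A - B| ≤ |A| + |B| := by
    intro A B
    calc |A - B| = |A + -B| := by rw [sub_eq_add_neg]
      _ ≤ |A| + |-B| := abs_add_le _ _
      _ = |A| + |B| := by rw [abs_neg]
  have hBdd : BddAbove (range (fun y : Icc (0:ℝ) 1 =>
      |(GNa N a {x ∈ Icc (0:ℝ) 1 | sSeq N a x n ∈ Icc (0:ℝ) y}).toReal
        - (GN N (Icc (0:ℝ) y)).toReal|)) := by
    refine ⟨((N:ℝ)+a)/N + C0, ?_⟩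
    rintro z ⟨y, rfl⟩
    have h1 : (GNa N a {x ∈ Icc (0:ℝ) 1 | sSeq N a x n ∈ Icc (0:ℝ) y}).toReal
        ≤ ((N:ℝ)+a)/N :=
      ENNReal.toReal_le_of_le_ofReal (by positivity) (GNa_le N hN ha0 _)
    have h2 : (GN N (Icc (0:ℝ) (y:ℝ))).toReal ≤ C0 :=
      ENNReal.toReal_le_of_le_ofReal hC0 (hGbd (y:ℝ) y.2.1 y.2.2)
    refine (habs _ _).trans ?_
    rw [abs_of_nonneg ENNReal.toReal_nonneg, abs_of_nonneg ENNReal.toReal_nonneg]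
    exact add_le_add h1 h2
  have hSb : ∀ c : ℝ, c ∈ Icc (0:ℝ) 1 →
      |(GNa N a {x ∈ Icc (0:ℝ) 1 | sSeq N a x n ∈ Icc (0:ℝ) c}).toReal
        - (GN N (Icc (0:ℝ) c)).toReal|
      ≤ ⨆ y : Icc (0:ℝ) 1,
          |(GNa N a {x ∈ Icc (0:ℝ) 1 | sSeq N a x n ∈ Icc (0:ℝ) y}).toReal
            - (GN N (Icc (0:ℝ) y)).toReal| := by
    intro c hc
    exact le_ciSup hBdd ⟨c, hc⟩
  -- conclude
  apply le_of_forall_pos_le_add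
  intro ε hε
  set ε' : ℝ := ε / (C0 + 1) with hε'def
  have hε' : 0 < ε' := by positivity
  set y : ℝ := max 0 (t - ε') with hydef
  have hy0 : 0 ≤ y := le_max_left _ _
  have hyt : y < t := max_lt htpos (by linarith)
  have hy1 : y ≤ 1 := max_le (by norm_num) (by linarith)
  have hty : t - y ≤ ε' := by
    have := le_max_right 0 (t - ε')
    linarith
  -- monotone step for the distribution function of s_{n,a}
  have hsub1 : {x ∈ Icc (0:ℝ) 1 | sSeq N a x n ∈ Icc (0:ℝ) y} ∪ Ioo xm xp
      ⊆ {x ∈ Icc (0:ℝ) 1 | sSeq N a x n ∈ Icc (0:ℝ) t} := by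
    rintro x (hx | hx)
    · exact ⟨hx.1, hx.2.1, hx.2.2.trans hyt.le⟩
    · refine ⟨⟨hxm0.trans hx.1.le, hx.2.le.trans hxp1⟩, ?_⟩
      rw [hcyl_s x hx]
      exact ⟨ht0, le_rfl⟩
  have hdisj : Disjoint {x ∈ Icc (0:ℝ) 1 | sSeq N a x n ∈ Icc (0:ℝ) y} (Ioo xm xp) := by
    rw [Set.disjoint_left]
    intro x hxA hxI
    have h1 := hcyl_s x hxI
    have h2 := hxA.2.2
    rw [h1] at h2
    linarith
  have hadd : GNa N a {x ∈ Icc (0:ℝ) 1 | sSeq N a x n ∈ Icc (0:ℝ) y}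
        + GNa N a (Ioo xm xp)
      ≤ GNa N a {x ∈ Icc (0:ℝ) 1 | sSeq N a x n ∈ Icc (0:ℝ) t} := by
    rw [← measure_union hdisj measurableSet_Ioo]
    exact measure_mono hsub1
  have hFstep : (GNa N a {x ∈ Icc (0:ℝ) 1 | sSeq N a x n ∈ Icc (0:ℝ) y}).toReal
        + (GNa N a (Ioo xm xp)).toReal
      ≤ (GNa N a {x ∈ Icc (0:ℝ) 1 | sSeq N a x n ∈ Icc (0:ℝ) t}).toReal := by
    have h := ENNReal.toReal_mono (hνfin _) hadd
    rwa [ENNReal.toReal_add (hνfin _) (hνfin _)] at h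
  -- continuity step for G_N
  have hGstep : (GN N (Icc (0:ℝ) t)).toReal
      ≤ (GN N (Icc (0:ℝ) y)).toReal + C0 * (t - y) := by
    have hunion : Icc (0:ℝ) y ∪ Ioc y t = Icc (0:ℝ) t := Icc_union_Ioc_eq_Icc hy0 hyt.le
    have hdj : Disjoint (Icc (0:ℝ) y) (Ioc y t) := by
      rw [Set.disjoint_left]
      intro x h1 h2
      exact absurd h1.2 (not_le.mpr h2.1)
    have hsplit : GN N (Icc (0:ℝ) t) = GN N (Icc (0:ℝ) y) + GN N (Ioc y t) := by
      rw [← hunion, measure_union hdj measurableSet_Ioc]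
    have hIoc : GN N (Ioc y t) ≤ ENNReal.ofReal (C0 * (t - y)) := by
      calc GN N (Ioc y t) ≤ ENNReal.ofReal C0 * volume (Ioc y t) :=
            GN_upper N hN measurableSet_Ioc
        _ = ENNReal.ofReal C0 * ENNReal.ofReal (t - y) := by rw [Real.volume_Ioc]
        _ = ENNReal.ofReal (C0 * (t - y)) := (ENNReal.ofReal_mul hC0).symm
    have hfin2 : GN N (Ioc y t) ≠ ⊤ := (hIoc.trans_lt ENNReal.ofReal_lt_top).ne
    rw [hsplit, ENNReal.toReal_add (hGfin y hy0 hy1) hfin2]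
    have := ENNReal.toReal_le_of_le_ofReal
      (mul_nonneg hC0 (by linarith) : 0 ≤ C0 * (t - y)) hIoc
    linarith
  -- combine everything
  have hS1 := hSb t ⟨ht0, ht1⟩
  have hS2 := hSb y ⟨hy0, hy1⟩
  have e1 : (GNa N a {x ∈ Icc (0:ℝ) 1 | sSeq N a x n ∈ Icc (0:ℝ) t}).toReal
        - (GN N (Icc (0:ℝ) t)).toReal
      ≤ |(GNa N a {x ∈ Icc (0:ℝ) 1 | sSeq N a x n ∈ Icc (0:ℝ) t}).toReal
        - (GN N (Icc (0:ℝ) t)).toReal| := le_abs_self _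
  have e2 : (GN N (Icc (0:ℝ) y)).toReal
        - (GNa N a {x ∈ Icc (0:ℝ) 1 | sSeq N a x n ∈ Icc (0:ℝ) y}).toReal
      ≤ |(GNa N a {x ∈ Icc (0:ℝ) 1 | sSeq N a x n ∈ Icc (0:ℝ) y}).toReal
        - (GN N (Icc (0:ℝ) y)).toReal| := by
    rw [abs_sub_comm]
    exact le_abs_self _
  have hC0e : C0 * (t - y) ≤ ε := by
    have h1 : C0 * (t - y) ≤ C0 * ε' := mul_le_mul_of_nonneg_left hty hC0
    have h2 : C0 * ε' ≤ (C0 + 1) * ε' := mul_le_mul_of_nonneg_right (by linarith) hε'.le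
    have h3 : (C0 + 1) * ε' = ε := by
      rw [hε'def, mul_comm, div_mul_cancel₀ _ (by linarith : C0 + (1:ℝ) ≠ 0)]
    linarith
  linarith [hkey, hFstep, hGstep, hS1, hS2, e1, e2, hC0e]
end

section
/- For every function f : I → ℂ of bounded variation, var(Uf) ≤ (1/(N+1))·var(f), where var denotes the total variation over I = [0,1]. -/
open MeasureTheory Set Filter
open scoped Classical Topology ENNReal
open scoped Classical Topology ENNReal

/-- The transition (Perron–Frobenius) operator
`(Uf)(s) = Σ_{i ≥ N} V_{N,i}(s) f(N/(s+i))` with `V_{N,i}(s) = (s+N)/((s+i)(s+i+1))`,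
the sum over integers `i ≥ N` being indexed by `i = N + k`, `k : ℕ`. -/
noncomputable def Uop (N : ℕ) (f : ℝ → ℂ) (s : ℝ) : ℂ :=
  ∑' k : ℕ, (((s + N) / ((s + ((N + k : ℕ) : ℝ)) * (s + ((N + k : ℕ) : ℝ) + 1)) : ℝ) : ℂ)
      * f ((N : ℝ) / (s + ((N + k : ℕ) : ℝ)))

namespace VarUopAux

/-- `g_i(u) = (u+N)/(u+i)` -/
noncomputable def gg (N i : ℕ) (u : ℝ) : ℝ := (u + N) / (u + i)
/-- `x_i(u) = N/(u+i)` -/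
noncomputable def xx (N i : ℕ) (u : ℝ) : ℝ := N / (u + i)
/-- `V_i(u) = g_i(u) - g_{i+1}(u)` -/
noncomputable def VV (N i : ℕ) (u : ℝ) : ℝ := gg N i u - gg N (i+1) u

variable {N i : ℕ} {u s t : ℝ}

lemma hden (hN : 1 ≤ N) (hi : N ≤ i) (hu : 0 ≤ u) : 0 < u + (i:ℝ) := by
  have : (1:ℝ) ≤ (i:ℝ) := by exact_mod_cast hN.trans hi
  linarith

lemma gg_nonneg (hN : 1 ≤ N) (hi : N ≤ i) (hu : 0 ≤ u) : 0 ≤ gg N i u := by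
  have := hden hN hi hu
  have : (0:ℝ) ≤ u + N := by positivity
  exact div_nonneg this (le_of_lt (hden hN hi hu))

lemma gg_le_one (hN : 1 ≤ N) (hi : N ≤ i) (hu : 0 ≤ u) : gg N i u ≤ 1 := by
  have h := hden hN hi hu
  rw [gg, div_le_one h]
  have : (N:ℝ) ≤ (i:ℝ) := by exact_mod_cast hi
  linarith

lemma gg_self (hN : 1 ≤ N) (hu : 0 ≤ u) : gg N N u = 1 := by
  have h := hden hN le_rfl hu
  rw [gg, div_self (ne_of_gt h)]

lemma gg_anti (hN : 1 ≤ N) (hi : N ≤ i) (hu : 0 ≤ u) : gg N (i+1) u ≤ gg N i u := by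
  have h1 := hden hN hi hu
  have h2 := hden hN (hi.trans (Nat.le_succ i)) hu
  have hnum : (0:ℝ) ≤ u + N := by
    have : (0:ℝ) ≤ (N:ℝ) := Nat.cast_nonneg N
    linarith
  apply div_le_div_of_nonneg_left hnum h1
  push_cast; linarith

lemma gg_mono (hN : 1 ≤ N) (hi : N ≤ i) (hs : 0 ≤ s) (hst : s ≤ t) :
    gg N i s ≤ gg N i t := by
  have h1 := hden hN hi hs
  have h2 := hden hN hi (hs.trans hst)
  rw [gg, gg, div_le_div_iff₀ h1 h2]
  have hNi : (N:ℝ) ≤ (i:ℝ) := by exact_mod_cast hi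
  nlinarith

lemma VV_nonneg (hN : 1 ≤ N) (hi : N ≤ i) (hu : 0 ≤ u) : 0 ≤ VV N i u :=
  sub_nonneg.2 (gg_anti hN hi hu)

lemma VV_eq (hN : 1 ≤ N) (hi : N ≤ i) (hu : 0 ≤ u) :
    VV N i u = (u + N) / ((u + i) * (u + i + 1)) := by
  have h1 := hden hN hi hu
  have h2 : (0:ℝ) < u + i + 1 := by linarith
  rw [VV, gg, gg]
  push_cast
  field_simp
  ring

lemma xx_mem (hN : 1 ≤ N) (hi : N ≤ i) (hu : 0 ≤ u) : xx N i u ∈ Icc (0:ℝ) 1 := by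
  have h := hden hN hi hu
  constructor
  · exact div_nonneg (Nat.cast_nonneg N) h.le
  · rw [xx, div_le_one h]
    have : (N:ℝ) ≤ (i:ℝ) := by exact_mod_cast hi
    linarith

lemma xx_anti_u (hN : 1 ≤ N) (hi : N ≤ i) (hs : 0 ≤ s) (hst : s ≤ t) :
    xx N i t ≤ xx N i s := by
  have h1 := hden hN hi hs
  apply div_le_div_of_nonneg_left (Nat.cast_nonneg N) h1
  linarith

lemma xx_succ_le (hN : 1 ≤ N) (hi : N ≤ i) (hs : 0 ≤ s) (ht : 0 ≤ t) (hts : t ≤ s + 1) :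
    xx N (i+1) s ≤ xx N i t := by
  have h1 := hden hN hi ht
  rw [xx, xx]
  apply div_le_div_of_nonneg_left (Nat.cast_nonneg N) h1
  push_cast
  linarith

lemma VV_gg_succ (k : ℕ) : VV N (N+k) u = gg N (N+k) u - gg N (N+(k+1)) u := by
  rfl

lemma sum_range_VV (n : ℕ) : ∑ k ∈ Finset.range n, VV N (N+k) u = gg N N u - gg N (N+n) u := by
  rw [Finset.sum_congr rfl (fun k _ => VV_gg_succ k)]
  exact Finset.sum_range_sub' (fun k => gg N (N+k) u) n

lemma gg_tendsto (hN : 1 ≤ N) (hu : 0 ≤ u) :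
    Tendsto (fun n => gg N (N+n) u) atTop (𝓝 0) := by
  have h1 : Tendsto (fun n : ℕ => (u+N)/(((n+1:ℕ)):ℝ)) atTop (𝓝 0) :=
    (tendsto_const_div_atTop_nhds_zero_nat (u+N)).comp (tendsto_add_atTop_nat 1)
  apply squeeze_zero (fun n => gg_nonneg hN (Nat.le_add_right N n) hu)
    (g := fun n => (u + N) / (((n+1:ℕ)):ℝ)) _ h1
  intro n
  have hn : (0:ℝ) < ((n+1:ℕ):ℝ) := by positivity
  rw [gg]
  apply div_le_div_of_nonneg_left (by positivity) hn
  push_cast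
  have hN1 : (1:ℝ) ≤ (N:ℝ) := by exact_mod_cast hN
  linarith

lemma summable_VV (hN : 1 ≤ N) (hu : 0 ≤ u) : Summable (fun k => VV N (N+k) u) := by
  apply summable_of_sum_range_le (c := 1) (fun k => VV_nonneg hN (Nat.le_add_right N k) hu)
  intro n
  rw [sum_range_VV, gg_self hN hu]
  have := gg_nonneg hN (Nat.le_add_right N n) hu
  linarith

section Sdef

variable {E : Type*} [NormedAddCommGroup E] [NormedSpace ℝ E] [CompleteSpace E]

/-- the generic transition sum -/
noncomputable def S (N : ℕ) (ψ : ℝ → E) (u : ℝ) : E :=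
  ∑' k : ℕ, VV N (N+k) u • ψ (xx N (N+k) u)

lemma summable_term (hN : 1 ≤ N) (hu : 0 ≤ u) {ψ : ℝ → E} {C : ℝ}
    (hψ : ∀ y ∈ Icc (0:ℝ) 1, ‖ψ y‖ ≤ C) :
    Summable (fun k => VV N (N+k) u • ψ (xx N (N+k) u)) := by
  apply Summable.of_norm_bounded
    ((summable_VV hN hu).mul_right C)
  intro k
  have hV := VV_nonneg hN (Nat.le_add_right N k) hu
  rw [norm_smul, Real.norm_eq_abs, abs_of_nonneg hV]
  exact mul_le_mul_of_nonneg_left (hψ _ (xx_mem hN (Nat.le_add_right N k) hu)) hV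

noncomputable def Qf (N : ℕ) (ψ : ℝ → E) (s t : ℝ) (k : ℕ) : E :=
  VV N (N+k) t • ψ (xx N (N+k) t) - VV N (N+k) s • ψ (xx N (N+k) s)

noncomputable def Pf (N : ℕ) (ψ : ℝ → E) (s t : ℝ) (k : ℕ) : E :=
  (gg N (N+k) t - gg N (N+(k+1)) s) • (ψ (xx N (N+k) t) - ψ (xx N (N+k) s))
  + (gg N (N+(k+1)) t - gg N (N+(k+1)) s) • (ψ (xx N (N+(k+1)) s) - ψ (xx N (N+k) t))

noncomputable def Wf (N : ℕ) (ψ : ℝ → E) (s t : ℝ) (k : ℕ) : E :=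
  (gg N (N+k) t - gg N (N+k) s) • ψ (xx N (N+k) s)

lemma PQW (N : ℕ) (ψ : ℝ → E) (s t : ℝ) (k : ℕ) :
    Pf N ψ s t k = Qf N ψ s t k + (Wf N ψ s t (k+1) - Wf N ψ s t k) := by
  show _ = (VV N (N+k) t • ψ (xx N (N+k) t) - VV N (N+k) s • ψ (xx N (N+k) s)) + _
  rw [VV_gg_succ, VV_gg_succ]
  unfold Pf Wf
  module

lemma S_sub (hN : 1 ≤ N) (hs : 0 ≤ s) (ht : 0 ≤ t) {ψ : ℝ → E} {C : ℝ}
    (hψ : ∀ y ∈ Icc (0:ℝ) 1, ‖ψ y‖ ≤ C) :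
    S N ψ t - S N ψ s = ∑' k, Qf N ψ s t k :=
  (Summable.tsum_sub (summable_term hN ht hψ) (summable_term hN hs hψ)).symm

lemma tsum_P_eq_Q (hN : 1 ≤ N) (hs : 0 ≤ s) (ht : 0 ≤ t) (hst : s ≤ t) {ψ : ℝ → E} {C : ℝ}
    (hψ : ∀ y ∈ Icc (0:ℝ) 1, ‖ψ y‖ ≤ C) (hPsum : Summable (Pf N ψ s t)) :
    ∑' k, Pf N ψ s t k = ∑' k, Qf N ψ s t k := by
  have hQsum : Summable (Qf N ψ s t) :=
    (summable_term hN ht hψ).sub (summable_term hN hs hψ)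
  have hΔW : Summable (fun k => Wf N ψ s t (k+1) - Wf N ψ s t k) := by
    have := hPsum.sub hQsum
    apply this.congr
    intro k
    rw [PQW N ψ s t k]
    abel
  have hW0 : Wf N ψ s t 0 = 0 := by
    show (gg N (N+0) t - gg N (N+0) s) • _ = _
    rw [Nat.add_zero, gg_self hN ht, gg_self hN hs, sub_self, zero_smul]
  have hWtend : Tendsto (Wf N ψ s t) atTop (𝓝 0) := by
    refine squeeze_zero_norm ?_ (show Tendsto (fun n => gg N (N+n) t * C) atTop (𝓝 0) by
      simpa using (gg_tendsto hN ht).mul_const C)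
    · intro n
      show ‖(gg N (N+n) t - gg N (N+n) s) • _‖ ≤ _
      rw [norm_smul, Real.norm_eq_abs]
      have h1 : gg N (N+n) s ≤ gg N (N+n) t := gg_mono hN (Nat.le_add_right N n) hs hst
      have h2 : 0 ≤ gg N (N+n) s := gg_nonneg hN (Nat.le_add_right N n) hs
      rw [abs_of_nonneg (by linarith)]
      have h3 : ‖ψ (xx N (N+n) s)‖ ≤ C := hψ _ (xx_mem hN (Nat.le_add_right N n) hs)
      have h4 : 0 ≤ gg N (N+n) t - gg N (N+n) s := by linarith
      calc (gg N (N+n) t - gg N (N+n) s) * ‖ψ (xx N (N+n) s)‖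
          ≤ gg N (N+n) t * ‖ψ (xx N (N+n) s)‖ := by nlinarith [norm_nonneg (ψ (xx N (N+n) s))]
        _ ≤ gg N (N+n) t * C := by
            have := gg_nonneg hN (Nat.le_add_right N n) ht
            nlinarith
  have hzero : ∑' k, (Wf N ψ s t (k+1) - Wf N ψ s t k) = 0 := by
    refine HasSum.tsum_eq ?_
    rw [hΔW.hasSum_iff_tendsto_nat]
    have : ∀ n, ∑ k ∈ Finset.range n, (Wf N ψ s t (k+1) - Wf N ψ s t k) = Wf N ψ s t n := by
      intro n; rw [Finset.sum_range_sub, hW0, sub_zero]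
    simpa [this] using hWtend
  calc ∑' k, Pf N ψ s t k
      = ∑' k, (Qf N ψ s t k + (Wf N ψ s t (k+1) - Wf N ψ s t k)) := by
        exact tsum_congr (PQW N ψ s t)
    _ = ∑' k, Qf N ψ s t k + ∑' k, (Wf N ψ s t (k+1) - Wf N ψ s t k) :=
        Summable.tsum_add hQsum hΔW
    _ = ∑' k, Qf N ψ s t k := by rw [hzero, add_zero]

end Sdef

section Key

variable {E : Type*} [NormedAddCommGroup E] [NormedSpace ℝ E] [CompleteSpace E]
variable {N : ℕ} {s t : ℝ}

lemma coeff_facts (hN : 1 ≤ N) (hs : 0 ≤ s) (ht : 0 ≤ t) (hst : s ≤ t) (k : ℕ) :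
    (0 ≤ gg N (N+k) t - gg N (N+(k+1)) s ∧ gg N (N+k) t - gg N (N+(k+1)) s ≤ 1) ∧
    (0 ≤ gg N (N+(k+1)) t - gg N (N+(k+1)) s ∧ gg N (N+(k+1)) t - gg N (N+(k+1)) s ≤ 1) := by
  have hik : N ≤ N+k := Nat.le_add_right N k
  have hik1 : N ≤ N+(k+1) := Nat.le_add_right N (k+1)
  have h1 : gg N (N+(k+1)) s ≤ gg N (N+k) s := gg_anti hN hik hs
  have h2 : gg N (N+k) s ≤ gg N (N+k) t := gg_mono hN hik hs hst
  have h3 : gg N (N+(k+1)) s ≤ gg N (N+(k+1)) t := gg_mono hN hik1 hs hst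
  have h4 : gg N (N+k) t ≤ 1 := gg_le_one hN hik ht
  have h5 : gg N (N+(k+1)) t ≤ 1 := gg_le_one hN hik1 ht
  have h6 : 0 ≤ gg N (N+(k+1)) s := gg_nonneg hN hik1 hs
  refine ⟨⟨by linarith, by linarith⟩, ⟨by linarith, by linarith⟩⟩

lemma Pf_norm_le (hN : 1 ≤ N) (hs : 0 ≤ s) (ht : 0 ≤ t) (hst : s ≤ t) (hts1 : t ≤ s + 1)
    {ψ : ℝ → E} {v : ℝ → ℝ}
    (hψv : ∀ a b : ℝ, a ∈ Icc (0:ℝ) 1 → b ∈ Icc (0:ℝ) 1 → a ≤ b → ‖ψ b - ψ a‖ ≤ v b - v a)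
    (k : ℕ) : ‖Pf N ψ s t k‖ ≤ -(Pf N v s t k) := by
  have hik : N ≤ N+k := Nat.le_add_right N k
  have hik1 : N ≤ N+(k+1) := Nat.le_add_right N (k+1)
  obtain ⟨⟨hα0, hα1⟩, ⟨hβ0, hβ1⟩⟩ := coeff_facts hN hs ht hst k
  have hx1 : xx N (N+k) t ≤ xx N (N+k) s := xx_anti_u hN hik hs hst
  have hx2 : xx N (N+(k+1)) s ≤ xx N (N+k) t := xx_succ_le hN hik hs ht hts1
  have hm1 := xx_mem hN hik hs (u := s)
  have hm2 := xx_mem hN hik ht (u := t)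
  have hm3 := xx_mem hN hik1 hs (u := s)
  have hd1 : ‖ψ (xx N (N+k) t) - ψ (xx N (N+k) s)‖ ≤ v (xx N (N+k) s) - v (xx N (N+k) t) := by
    rw [← norm_neg, neg_sub]
    exact hψv _ _ hm2 hm1 hx1
  have hd2 : ‖ψ (xx N (N+(k+1)) s) - ψ (xx N (N+k) t)‖ ≤ v (xx N (N+k) t) - v (xx N (N+(k+1)) s) := by
    rw [← norm_neg, neg_sub]
    exact hψv _ _ hm3 hm2 hx2
  have hPv : -(Pf N v s t k) =
      (gg N (N+k) t - gg N (N+(k+1)) s) * (v (xx N (N+k) s) - v (xx N (N+k) t))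
      + (gg N (N+(k+1)) t - gg N (N+(k+1)) s) * (v (xx N (N+k) t) - v (xx N (N+(k+1)) s)) := by
    simp only [Pf, smul_eq_mul]
    ring
  rw [hPv]
  calc ‖Pf N ψ s t k‖
      ≤ ‖(gg N (N+k) t - gg N (N+(k+1)) s) • (ψ (xx N (N+k) t) - ψ (xx N (N+k) s))‖
        + ‖(gg N (N+(k+1)) t - gg N (N+(k+1)) s) • (ψ (xx N (N+(k+1)) s) - ψ (xx N (N+k) t))‖ :=
        norm_add_le _ _
    _ ≤ (gg N (N+k) t - gg N (N+(k+1)) s) * (v (xx N (N+k) s) - v (xx N (N+k) t))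
        + (gg N (N+(k+1)) t - gg N (N+(k+1)) s) * (v (xx N (N+k) t) - v (xx N (N+(k+1)) s)) := by
        rw [norm_smul, norm_smul, Real.norm_eq_abs, Real.norm_eq_abs,
          abs_of_nonneg hα0, abs_of_nonneg hβ0]
        gcongr

lemma negPf_le_τ (hN : 1 ≤ N) (hs : 0 ≤ s) (ht : 0 ≤ t) (hst : s ≤ t) (hts1 : t ≤ s + 1)
    {ψ : ℝ → E} {v : ℝ → ℝ}
    (hψv : ∀ a b : ℝ, a ∈ Icc (0:ℝ) 1 → b ∈ Icc (0:ℝ) 1 → a ≤ b → ‖ψ b - ψ a‖ ≤ v b - v a)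
    (k : ℕ) : -(Pf N v s t k) ≤ v (xx N (N+k) s) - v (xx N (N+(k+1)) s) := by
  have hik : N ≤ N+k := Nat.le_add_right N k
  have hik1 : N ≤ N+(k+1) := Nat.le_add_right N (k+1)
  obtain ⟨⟨hα0, hα1⟩, ⟨hβ0, hβ1⟩⟩ := coeff_facts hN hs ht hst k
  have hx1 : xx N (N+k) t ≤ xx N (N+k) s := xx_anti_u hN hik hs hst
  have hx2 : xx N (N+(k+1)) s ≤ xx N (N+k) t := xx_succ_le hN hik hs ht hts1
  have hm1 := xx_mem hN hik hs (u := s)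
  have hm2 := xx_mem hN hik ht (u := t)
  have hm3 := xx_mem hN hik1 hs (u := s)
  have hA : 0 ≤ v (xx N (N+k) s) - v (xx N (N+k) t) :=
    le_trans (norm_nonneg _) (hψv _ _ hm2 hm1 hx1)
  have hB : 0 ≤ v (xx N (N+k) t) - v (xx N (N+(k+1)) s) :=
    le_trans (norm_nonneg _) (hψv _ _ hm3 hm2 hx2)
  have hPv : -(Pf N v s t k) =
      (gg N (N+k) t - gg N (N+(k+1)) s) * (v (xx N (N+k) s) - v (xx N (N+k) t))
      + (gg N (N+(k+1)) t - gg N (N+(k+1)) s) * (v (xx N (N+k) t) - v (xx N (N+(k+1)) s)) := by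
    simp only [Pf, smul_eq_mul]
    ring
  rw [hPv]
  nlinarith

lemma key (hN : 1 ≤ N) {ψ : ℝ → E} {v : ℝ → ℝ}
    (hψv : ∀ a b : ℝ, a ∈ Icc (0:ℝ) 1 → b ∈ Icc (0:ℝ) 1 → a ≤ b → ‖ψ b - ψ a‖ ≤ v b - v a)
    (hs : s ∈ Icc (0:ℝ) 1) (ht : t ∈ Icc (0:ℝ) 1) (hst : s ≤ t) :
    ‖S N ψ t - S N ψ s‖ ≤ S N v s - S N v t := by
  have hs0 : (0:ℝ) ≤ s := hs.1
  have ht0 : (0:ℝ) ≤ t := ht.1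
  have hts1 : t ≤ s + 1 := by linarith [ht.2]
  have hmem0 : (0:ℝ) ∈ Icc (0:ℝ) 1 := by norm_num
  have hmem1 : (1:ℝ) ∈ Icc (0:ℝ) 1 := by norm_num
  have hvmono : ∀ a b : ℝ, a ∈ Icc (0:ℝ) 1 → b ∈ Icc (0:ℝ) 1 → a ≤ b → v a ≤ v b := by
    intro a b ha hb hab
    have h := hψv a b ha hb hab
    have := norm_nonneg (ψ b - ψ a)
    linarith
  have hvv : ∀ a b : ℝ, a ∈ Icc (0:ℝ) 1 → b ∈ Icc (0:ℝ) 1 → a ≤ b →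
      ‖v b - v a‖ ≤ v b - v a := by
    intro a b ha hb hab
    rw [Real.norm_eq_abs, abs_of_nonneg (by linarith [hvmono a b ha hb hab])]
  have hCψ : ∀ y ∈ Icc (0:ℝ) 1, ‖ψ y‖ ≤ ‖ψ 0‖ + (v 1 - v 0) := by
    intro y hy
    have h1 := hψv 0 y hmem0 hy hy.1
    have h2 := hvmono y 1 hy hmem1 hy.2
    calc ‖ψ y‖ = ‖ψ 0 + (ψ y - ψ 0)‖ := by rw [add_sub_cancel]
      _ ≤ ‖ψ 0‖ + ‖ψ y - ψ 0‖ := norm_add_le _ _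
      _ ≤ ‖ψ 0‖ + (v 1 - v 0) := by linarith
  have hCv : ∀ y ∈ Icc (0:ℝ) 1, ‖v y‖ ≤ |v 0| + |v 1| := by
    intro y hy
    have h0 := hvmono 0 y hmem0 hy hy.1
    have h1 := hvmono y 1 hy hmem1 hy.2
    rw [Real.norm_eq_abs, abs_le]
    constructor
    · linarith [neg_abs_le (v 0), abs_nonneg (v 1)]
    · linarith [le_abs_self (v 1), abs_nonneg (v 0)]
  -- τ : telescoping majorant
  have hτnonneg : ∀ k : ℕ, 0 ≤ v (xx N (N+k) s) - v (xx N (N+(k+1)) s) := by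
    intro k
    have hik : N ≤ N+k := Nat.le_add_right N k
    have hik1 : N ≤ N+(k+1) := Nat.le_add_right N (k+1)
    have hx : xx N (N+(k+1)) s ≤ xx N (N+k) s := xx_succ_le hN hik hs0 hs0 (by linarith)
    have := hvmono _ _ (xx_mem hN hik1 hs0) (xx_mem hN hik hs0) hx
    linarith
  have hτsum : Summable (fun k => v (xx N (N+k) s) - v (xx N (N+(k+1)) s)) := by
    apply summable_of_sum_range_le (c := v 1 - v 0) hτnonneg
    intro n
    rw [Finset.sum_range_sub' (fun k => v (xx N (N+k) s)) n]
    have hik : N ≤ N+n := Nat.le_add_right N n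
    have h1 := hvmono _ _ (xx_mem hN le_rfl hs0 (u := s)) hmem1 (xx_mem hN le_rfl hs0 (u := s)).2
    have h2 := hvmono 0 _ hmem0 (xx_mem hN hik hs0) (xx_mem hN hik hs0).1
    exact sub_le_sub h1 h2
  have hPψsum : Summable (Pf N ψ s t) :=
    Summable.of_norm_bounded hτsum
      (fun k => (Pf_norm_le hN hs0 ht0 hst hts1 hψv k).trans
        (negPf_le_τ hN hs0 ht0 hst hts1 hψv k))
  have hPvsum : Summable (Pf N v s t) :=
    Summable.of_norm_bounded hτsum
      (fun k => (Pf_norm_le hN hs0 ht0 hst hts1 hvv k).trans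
        (negPf_le_τ hN hs0 ht0 hst hts1 hvv k))
  have hnorm : Summable (fun k => ‖Pf N ψ s t k‖) :=
    Summable.of_norm_bounded hτsum
      (fun k => by
        rw [norm_norm]
        exact (Pf_norm_le hN hs0 ht0 hst hts1 hψv k).trans
          (negPf_le_τ hN hs0 ht0 hst hts1 hψv k))
  calc ‖S N ψ t - S N ψ s‖
      = ‖∑' k, Qf N ψ s t k‖ := by rw [S_sub hN hs0 ht0 hCψ]
    _ = ‖∑' k, Pf N ψ s t k‖ := by rw [tsum_P_eq_Q hN hs0 ht0 hst hCψ hPψsum]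
    _ ≤ ∑' k, ‖Pf N ψ s t k‖ := norm_tsum_le_tsum_norm hnorm
    _ ≤ ∑' k, -(Pf N v s t k) :=
        Summable.tsum_le_tsum (fun k => Pf_norm_le hN hs0 ht0 hst hts1 hψv k) hnorm hPvsum.neg
    _ = -∑' k, Pf N v s t k := tsum_neg
    _ = -∑' k, Qf N v s t k := by rw [tsum_P_eq_Q hN hs0 ht0 hst hCv hPvsum]
    _ = -(S N v t - S N v s) := by rw [S_sub hN hs0 ht0 hCv]
    _ = S N v s - S N v t := neg_sub _ _

end Key

section Endpoints

variable {N : ℕ}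

lemma S_zero_sub_one (hN : 1 ≤ N) {v : ℝ → ℝ} {C : ℝ}
    (hCv : ∀ y ∈ Icc (0:ℝ) 1, ‖v y‖ ≤ C)
    (hv0 : ∀ y ∈ Icc (0:ℝ) 1, 0 ≤ v y) :
    S N v 0 - S N v 1 ≤ v 1 / ((N:ℝ)+1) := by
  have hNpos : (0:ℝ) < N := by exact_mod_cast Nat.lt_of_lt_of_le Nat.zero_lt_one hN
  have hsum0 : Summable (fun k => VV N (N+k) (0:ℝ) • v (xx N (N+k) 0)) :=
    summable_term hN le_rfl hCv
  have hsum1 : Summable (fun k => VV N (N+k) (1:ℝ) • v (xx N (N+k) 1)) :=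
    summable_term hN zero_le_one hCv
  have hVV0 : VV N (N+0) (0:ℝ) = 1/((N:ℝ)+1) := by
    rw [VV_eq hN (Nat.le_add_right N 0) le_rfl]
    push_cast
    field_simp
    ring
  have hxx0 : xx N (N+0) (0:ℝ) = 1 := by
    unfold xx
    push_cast
    rw [add_zero, zero_add, div_self (ne_of_gt hNpos)]
  have hterm : ∀ k : ℕ, VV N (N+(k+1)) (0:ℝ) • v (xx N (N+(k+1)) 0)
      ≤ VV N (N+k) (1:ℝ) • v (xx N (N+k) 1) := by
    intro k
    have hxeq : xx N (N+(k+1)) (0:ℝ) = xx N (N+k) 1 := by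
      unfold xx; push_cast; ring_nf
    rw [smul_eq_mul, smul_eq_mul, hxeq]
    apply mul_le_mul_of_nonneg_right _ (hv0 _ (xx_mem hN (Nat.le_add_right N k) zero_le_one))
    rw [VV_eq hN (Nat.le_add_right N (k+1)) le_rfl, VV_eq hN (Nat.le_add_right N k) zero_le_one]
    push_cast
    rw [div_le_div_iff₀ (by positivity) (by positivity)]
    nlinarith [Nat.cast_nonneg (α := ℝ) k, hNpos]
  have h1 : S N v 0 = (1/((N:ℝ)+1)) * v 1
      + ∑' k, VV N (N+(k+1)) (0:ℝ) • v (xx N (N+(k+1)) 0) := by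
    rw [S, Summable.tsum_eq_zero_add hsum0, hVV0, hxx0, smul_eq_mul]
  have h2 : ∑' k, VV N (N+(k+1)) (0:ℝ) • v (xx N (N+(k+1)) 0) ≤ S N v 1 := by
    apply Summable.tsum_le_tsum hterm _ hsum1
    exact (summable_nat_add_iff 1).2 hsum0
  have : S N v 0 ≤ (1/((N:ℝ)+1)) * v 1 + S N v 1 := by rw [h1]; linarith
  rw [div_eq_inv_mul]
  rw [one_div] at this
  linarith

end Endpoints

end VarUopAux

open VarUopAux in
/-- For every function `f : I → ℂ` of bounded variation,
`var(Uf) ≤ (1/(N+1)) var(f)`. -/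
theorem var_Uop (N : ℕ) (hN : 1 ≤ N) (f : ℝ → ℂ)
    (hf : eVariationOn f (Icc (0:ℝ) 1) ≠ ⊤) :
    eVariationOn (Uop N f) (Icc (0:ℝ) 1) ≤
      ((N : ℝ≥0∞) + 1)⁻¹ * eVariationOn f (Icc (0:ℝ) 1) := by
  set Vt := eVariationOn f (Icc (0:ℝ) 1) with hVt
  set v : ℝ → ℝ := fun y => (eVariationOn f (Icc (0:ℝ) y)).toReal with hv
  have hfin : ∀ a b : ℝ, 0 ≤ a → b ≤ 1 → eVariationOn f (Icc a b) ≠ ⊤ := by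
    intro a b ha hb
    exact ne_top_of_le_ne_top hf (eVariationOn.mono f (Icc_subset_Icc ha hb))
  have hψv : ∀ a b : ℝ, a ∈ Icc (0:ℝ) 1 → b ∈ Icc (0:ℝ) 1 → a ≤ b →
      ‖f b - f a‖ ≤ v b - v a := by
    intro a b ha hb hab
    have hIcc : eVariationOn f (Icc 0 a) + eVariationOn f (Icc a b) = eVariationOn f (Icc 0 b) := by
      have := eVariationOn.Icc_add_Icc f (s := univ) ha.1 hab (mem_univ a)
      simpa [univ_inter] using this
    have hedist : edist (f a) (f b) ≤ eVariationOn f (Icc a b) :=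
      eVariationOn.edist_le f (left_mem_Icc.2 hab) (right_mem_Icc.2 hab)
    have h1 : eVariationOn f (Icc (0:ℝ) a) ≠ ⊤ := hfin 0 a le_rfl (ha.2)
    have h2 : eVariationOn f (Icc a b) ≠ ⊤ := hfin a b ha.1 hb.2
    have h3 : v b = v a + (eVariationOn f (Icc a b)).toReal := by
      rw [hv]; simp only
      rw [← hIcc, ENNReal.toReal_add h1 h2]
    have h4 : dist (f a) (f b) ≤ (eVariationOn f (Icc a b)).toReal := by
      have := ENNReal.toReal_mono h2 hedist
      rwa [edist_dist, ENNReal.toReal_ofReal dist_nonneg] at this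
    rw [h3]
    rw [dist_comm, dist_eq_norm] at h4
    linarith
  have hbound : ∀ s t : ℝ, s ∈ Icc (0:ℝ) 1 → t ∈ Icc (0:ℝ) 1 → s ≤ t →
      ‖S N f t - S N f s‖ ≤ S N v s - S N v t := fun s t hs ht hst => key hN hψv hs ht hst
  have hmem0 : (0:ℝ) ∈ Icc (0:ℝ) 1 := by norm_num
  have hmem1 : (1:ℝ) ∈ Icc (0:ℝ) 1 := by norm_num
  have hv0 : ∀ y ∈ Icc (0:ℝ) 1, 0 ≤ v y := fun y _ => ENNReal.toReal_nonneg
  have hCv : ∀ y ∈ Icc (0:ℝ) 1, ‖v y‖ ≤ Vt.toReal := by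
    intro y hy
    rw [Real.norm_eq_abs, abs_of_nonneg (hv0 y hy)]
    exact ENNReal.toReal_mono hf (eVariationOn.mono f (Icc_subset_Icc le_rfl hy.2))
  have hUeq : EqOn (Uop N f) (S N f) (Icc (0:ℝ) 1) := by
    intro u hu
    unfold Uop S
    apply tsum_congr
    intro k
    rw [VV_eq hN (Nat.le_add_right N k) hu.1, Complex.real_smul]
    rfl
  rw [eVariationOn.eq_of_eqOn hUeq]
  have hfinal : eVariationOn (S N f) (Icc (0:ℝ) 1) ≤ ENNReal.ofReal (v 1 / ((N:ℝ)+1)) := by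
    rw [eVariationOn]
    apply iSup_le
    rintro ⟨n, u, hu, hus⟩
    simp only
    have hstep : ∀ i : ℕ, edist (S N f (u (i+1))) (S N f (u i))
        ≤ ENNReal.ofReal (S N v (u i) - S N v (u (i+1))) := by
      intro i
      rw [edist_dist, dist_eq_norm]
      exact ENNReal.ofReal_le_ofReal (hbound (u i) (u (i+1)) (hus i) (hus (i+1)) (hu (Nat.le_succ i)))
    have hnonneg : ∀ i : ℕ, 0 ≤ S N v (u i) - S N v (u (i+1)) := by
      intro i
      exact le_trans (norm_nonneg _) (hbound (u i) (u (i+1)) (hus i) (hus (i+1)) (hu (Nat.le_succ i)))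
    calc ∑ i ∈ Finset.range n, edist (S N f (u (i+1))) (S N f (u i))
        ≤ ∑ i ∈ Finset.range n, ENNReal.ofReal (S N v (u i) - S N v (u (i+1))) :=
          Finset.sum_le_sum (fun i _ => hstep i)
      _ = ENNReal.ofReal (∑ i ∈ Finset.range n, (S N v (u i) - S N v (u (i+1)))) :=
          (ENNReal.ofReal_sum_of_nonneg (fun i _ => hnonneg i)).symm
      _ = ENNReal.ofReal (S N v (u 0) - S N v (u n)) := by
          rw [Finset.sum_range_sub' (fun i => S N v (u i)) n]
      _ ≤ ENNReal.ofReal (S N v 0 - S N v 1) := by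
          apply ENNReal.ofReal_le_ofReal
          have ha : 0 ≤ S N v 0 - S N v (u 0) :=
            le_trans (norm_nonneg _) (hbound 0 (u 0) hmem0 (hus 0) (hus 0).1)
          have hb : 0 ≤ S N v (u n) - S N v 1 :=
            le_trans (norm_nonneg _) (hbound (u n) 1 (hus n) hmem1 (hus n).2)
          linarith
      _ ≤ ENNReal.ofReal (v 1 / ((N:ℝ)+1)) :=
          ENNReal.ofReal_le_ofReal (S_zero_sub_one hN hCv hv0)
  refine hfinal.trans ?_
  have hv1 : v 1 = Vt.toReal := rfl
  rw [hv1, ENNReal.ofReal_div_of_pos (by positivity), ENNReal.ofReal_toReal hf]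
  have hcast : ENNReal.ofReal ((N:ℝ)+1) = (N : ℝ≥0∞) + 1 := by
    rw [ENNReal.ofReal_add (Nat.cast_nonneg N) zero_le_one, ENNReal.ofReal_natCast,
      ENNReal.ofReal_one]
  rw [hcast, ENNReal.div_eq_inv_mul]
end

section
/- For every function f : I → ℂ of bounded variation and every n ≥ 0: (i) var(U^n f) ≤ (1/(N+1)^n)·var(f), and (ii) sup_{s ∈ I} | (U^n f)(s) − ∫_I f dG_N | ≤ (1/(N+1)^n)·var(f). -/
open MeasureTheory Set Filter
open scoped Classical Topology ENNReal

namespace GKW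

noncomputable def wr (N k : ℕ) (s : ℝ) : ℝ := (s + N) / (s + N + k)
noncomputable def Vr (N k : ℕ) (s : ℝ) : ℝ := (s + N) / ((s + N + k) * (s + N + k + 1))
noncomputable def gp (N k : ℕ) (s : ℝ) : ℝ := (N : ℝ) / (s + N + k)

variable {N : ℕ} {s t : ℝ}

lemma Ncast_pos (hN : 1 ≤ N) : (1:ℝ) ≤ (N:ℝ) := by exact_mod_cast hN

lemma den_pos (hN : 1 ≤ N) (hs : 0 ≤ s) (k : ℕ) : 0 < s + N + k := by
  have h1 := Ncast_pos (N := N) hN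
  have h2 : (0:ℝ) ≤ k := Nat.cast_nonneg k
  linarith

lemma num_pos (hN : 1 ≤ N) (hs : 0 ≤ s) : 0 < s + N := by
  have h1 := Ncast_pos (N := N) hN; linarith

lemma wr_nonneg (hN : 1 ≤ N) (hs : 0 ≤ s) (k : ℕ) : 0 ≤ wr N k s :=
  div_nonneg (num_pos hN hs).le (den_pos hN hs k).le

lemma wr_le_one (hN : 1 ≤ N) (hs : 0 ≤ s) (k : ℕ) : wr N k s ≤ 1 := by
  rw [wr, div_le_one (den_pos hN hs k)]
  have : (0:ℝ) ≤ k := Nat.cast_nonneg k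
  linarith

lemma wr_zero_eq (hN : 1 ≤ N) (hs : 0 ≤ s) : wr N 0 s = 1 := by
  rw [wr]; push_cast; rw [add_zero, div_self (num_pos hN hs).ne']

lemma Vr_eq (hN : 1 ≤ N) (hs : 0 ≤ s) (k : ℕ) : Vr N k s = wr N k s - wr N (k+1) s := by
  have h1 := den_pos hN hs k
  have h2 := den_pos hN hs (k+1)
  have hc : ((k+1 : ℕ):ℝ) = (k:ℝ) + 1 := by push_cast; ring
  rw [Vr, wr, wr, hc]
  have h2' : s + ↑N + ((k:ℝ)+1) ≠ 0 := by rw [hc] at h2; linarith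
  field_simp
  ring

lemma Vr_nonneg (hN : 1 ≤ N) (hs : 0 ≤ s) (k : ℕ) : 0 ≤ Vr N k s := by
  have h1 := den_pos hN hs k
  have h2 := den_pos hN hs (k+1)
  have : s + (N:ℝ) + k + 1 > 0 := by push_cast at h2; linarith
  exact div_nonneg (num_pos hN hs).le (by positivity)

lemma wr_tendsto (hN : 1 ≤ N) (hs : 0 ≤ s) :
    Tendsto (fun k : ℕ => wr N k s) atTop (nhds 0) := by
  have h : Tendsto (fun k : ℕ => s + (N:ℝ) + k) atTop atTop :=
    tendsto_atTop_add_const_left _ _ tendsto_natCast_atTop_atTop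
  have := h.inv_tendsto_atTop
  have h2 : Tendsto (fun k : ℕ => (s + N) * (s + (N:ℝ) + k)⁻¹) atTop (nhds ((s+N) * 0)) :=
    this.const_mul _
  rw [mul_zero] at h2
  simpa [wr, div_eq_mul_inv] using h2

lemma summable_Vr (hN : 1 ≤ N) (hs : 0 ≤ s) : Summable (fun k => Vr N k s) := by
  apply summable_of_sum_range_le (c := 1) (Vr_nonneg hN hs)
  intro n
  have : ∀ k ∈ Finset.range n, Vr N k s = wr N k s - wr N (k+1) s :=
    fun k _ => Vr_eq hN hs k
  rw [Finset.sum_congr rfl this, Finset.sum_range_sub' (fun k => wr N k s) n,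
    wr_zero_eq hN hs]
  have := wr_nonneg hN hs n
  linarith

lemma hasSum_Vr (hN : 1 ≤ N) (hs : 0 ≤ s) : HasSum (fun k => Vr N k s) 1 := by
  rw [(summable_Vr hN hs).hasSum_iff_tendsto_nat]
  have : ∀ n : ℕ, ∑ k ∈ Finset.range n, Vr N k s = 1 - wr N n s := by
    intro n
    have : ∀ k ∈ Finset.range n, Vr N k s = wr N k s - wr N (k+1) s :=
      fun k _ => Vr_eq hN hs k
    rw [Finset.sum_congr rfl this, Finset.sum_range_sub' (fun k => wr N k s) n,
      wr_zero_eq hN hs]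
  simp only [this]
  have := (wr_tendsto (s := s) hN hs).const_sub 1
  simpa using this

lemma gp_mem (hN : 1 ≤ N) (hs : 0 ≤ s) (k : ℕ) : gp N k s ∈ Icc (0:ℝ) 1 := by
  have h1 := den_pos hN hs k
  have h2 : (1:ℝ) ≤ N := Ncast_pos hN
  constructor
  · exact div_nonneg (by linarith) h1.le
  · rw [gp, div_le_one h1]
    have : (0:ℝ) ≤ k := Nat.cast_nonneg k
    linarith

lemma gp_pos (hN : 1 ≤ N) (hs : 0 ≤ s) (k : ℕ) : 0 < gp N k s := by
  have h1 := den_pos hN hs k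
  have h2 : (1:ℝ) ≤ N := Ncast_pos hN
  exact div_pos (by linarith) h1

lemma gp_anti_k (hN : 1 ≤ N) (hs : 0 ≤ s) {k l : ℕ} (hkl : k ≤ l) :
    gp N l s ≤ gp N k s := by
  have h1 := den_pos hN hs k
  have h2 : (1:ℝ) ≤ N := Ncast_pos hN
  apply div_le_div_of_nonneg_left (by linarith) h1
  have : (k:ℝ) ≤ l := by exact_mod_cast hkl
  linarith

lemma gp_anti_s (hN : 1 ≤ N) (hs : 0 ≤ s) (hst : s ≤ t) (k : ℕ) :
    gp N k t ≤ gp N k s := by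
  have h1 := den_pos hN hs k
  have h2 : (1:ℝ) ≤ N := Ncast_pos hN
  apply div_le_div_of_nonneg_left (by linarith) h1
  linarith

lemma wr_mono_s (hN : 1 ≤ N) (hs : 0 ≤ s) (hst : s ≤ t) (k : ℕ) :
    wr N k s ≤ wr N k t := by
  have h1 := den_pos hN hs k
  have h2 := den_pos hN (le_trans hs hst) k
  rw [wr, wr, div_le_div_iff₀ h1 h2]
  have hk : (0:ℝ) ≤ k := Nat.cast_nonneg k
  nlinarith

lemma gp_one_eq (k : ℕ) : gp N k 1 = gp N (k+1) 0 := by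
  rw [gp, gp]; push_cast; ring_nf


section Op

variable {E : Type*} [NormedAddCommGroup E] [NormedSpace ℝ E] [CompleteSpace E]

noncomputable def UE (N : ℕ) (f : ℝ → E) (s : ℝ) : E :=
  ∑' k : ℕ, Vr N k s • f (gp N k s)

lemma summable_term (hN : 1 ≤ N) (hs : 0 ≤ s) {f : ℝ → E} {M : ℝ}
    (hM : ∀ x ∈ Icc (0:ℝ) 1, ‖f x‖ ≤ M) :
    Summable fun k : ℕ => Vr N k s • f (gp N k s) := by
  apply Summable.of_norm_bounded (g := fun k => Vr N k s * M)
    (((summable_Vr hN hs).mul_right M))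
  intro k
  rw [norm_smul, Real.norm_eq_abs, abs_of_nonneg (Vr_nonneg hN hs k)]
  exact mul_le_mul_of_nonneg_left (hM _ (gp_mem hN hs k)) (Vr_nonneg hN hs k)

lemma norm_le_of_BV {f : ℝ → E} (hf : eVariationOn f (Icc (0:ℝ) 1) ≠ ⊤) {x : ℝ}
    (hx : x ∈ Icc (0:ℝ) 1) :
    ‖f x‖ ≤ ‖f 1‖ + (eVariationOn f (Icc (0:ℝ) 1)).toReal := by
  have h1 : (1:ℝ) ∈ Icc (0:ℝ) 1 := ⟨zero_le_one, le_refl _⟩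
  have hle := eVariationOn.edist_le f hx h1
  have h2 : dist (f x) (f 1) ≤ (eVariationOn f (Icc (0:ℝ) 1)).toReal := by
    rw [dist_edist]
    exact ENNReal.toReal_mono hf hle
  rw [dist_eq_norm] at h2
  have he : f 1 + (f x - f 1) = f x := by abel
  calc ‖f x‖ = ‖f 1 + (f x - f 1)‖ := by rw [he]
    _ ≤ ‖f 1‖ + ‖f x - f 1‖ := norm_add_le _ _
    _ ≤ _ := by linarith

lemma sum_edist_le (hN : 1 ≤ N) {f : ℝ → E} (hs : s ∈ Icc (0:ℝ) 1) (n : ℕ) :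
    ∑ k ∈ Finset.range n, edist (f (gp N (k+1) s)) (f (gp N k s))
      ≤ eVariationOn f (Icc (0:ℝ) 1) := by
  set u : ℕ → ℝ := fun i => gp N (n - i) s with hu_def
  have hu : Monotone u := fun i j hij => gp_anti_k hN hs.1 (Nat.sub_le_sub_left hij n)
  have hus : ∀ i, u i ∈ Icc (0:ℝ) 1 := fun i => gp_mem hN hs.1 _
  have key := eVariationOn.sum_le (f := f) (n := n) hu hus
  refine le_trans (le_of_eq ?_) key
  rw [← Finset.sum_range_reflect]
  apply Finset.sum_congr rfl
  intro i hi
  have hi' : i < n := Finset.mem_range.mp hi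
  have e1 : n - 1 - i + 1 = n - i := by omega
  have e2 : n - (i+1) = n - 1 - i := by omega
  have hui : u i = gp N (n - 1 - i + 1) s := by show gp N (n - i) s = _; rw [e1]
  have hui1 : u (i+1) = gp N (n - 1 - i) s := by show gp N (n - (i+1)) s = _; rw [e2]
  rw [hui, hui1, edist_comm]

lemma sum_norm_inc_le (hN : 1 ≤ N) {f : ℝ → E}
    (hf : eVariationOn f (Icc (0:ℝ) 1) ≠ ⊤) (hs : s ∈ Icc (0:ℝ) 1) (n : ℕ) :
    ∑ k ∈ Finset.range n, ‖f (gp N (k+1) s) - f (gp N k s)‖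
      ≤ (eVariationOn f (Icc (0:ℝ) 1)).toReal := by
  have h := ENNReal.toReal_mono hf (sum_edist_le hN hs n)
  rw [ENNReal.toReal_sum (fun a _ => edist_ne_top _ _)] at h
  refine le_trans (le_of_eq ?_) h
  apply Finset.sum_congr rfl
  intro k _
  rw [← dist_eq_norm, dist_edist]

lemma summable_inc (hN : 1 ≤ N) {f : ℝ → E}
    (hf : eVariationOn f (Icc (0:ℝ) 1) ≠ ⊤) (hs : s ∈ Icc (0:ℝ) 1) :
    Summable fun k : ℕ => ‖f (gp N (k+1) s) - f (gp N k s)‖ :=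
  summable_of_sum_range_le (fun _ => norm_nonneg _) (sum_norm_inc_le hN hf hs)

lemma key_identity (hN : 1 ≤ N) {f : ℝ → E} {M : ℝ}
    (hM : ∀ x ∈ Icc (0:ℝ) 1, ‖f x‖ ≤ M)
    (hsum : Summable fun k : ℕ => ‖f (gp N (k+1) s) - f (gp N k s)‖)
    (hs : s ∈ Icc (0:ℝ) 1) (ht : t ∈ Icc (0:ℝ) 1) :
    UE N f t - UE N f s
      = (∑' k : ℕ, Vr N k t • (f (gp N k t) - f (gp N k s)))
        + ∑' k : ℕ, (wr N (k+1) t - wr N (k+1) s) • (f (gp N (k+1) s) - f (gp N k s)) := by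
  have hM0 : 0 ≤ M := le_trans (norm_nonneg _) (hM 1 ⟨zero_le_one, le_refl _⟩)
  set c : ℕ → E := fun k => f (gp N k s) with hc_def
  set b : ℕ → ℝ := fun k => wr N k t - wr N k s with hb_def
  have ha : Summable (fun k : ℕ => Vr N k t • f (gp N k t)) := summable_term hN ht.1 hM
  have hb : Summable (fun k : ℕ => Vr N k s • f (gp N k s)) := summable_term hN hs.1 hM
  have h1 : Summable (fun k : ℕ => Vr N k t • (f (gp N k t) - f (gp N k s))) := by
    apply Summable.of_norm_bounded (g := fun k => Vr N k t * (2*M))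
      ((summable_Vr hN ht.1).mul_right _)
    intro k
    rw [norm_smul, Real.norm_eq_abs, abs_of_nonneg (Vr_nonneg hN ht.1 k)]
    refine mul_le_mul_of_nonneg_left ?_ (Vr_nonneg hN ht.1 k)
    calc ‖f (gp N k t) - f (gp N k s)‖ ≤ ‖f (gp N k t)‖ + ‖f (gp N k s)‖ := norm_sub_le _ _
      _ ≤ M + M := add_le_add (hM _ (gp_mem hN ht.1 k)) (hM _ (gp_mem hN hs.1 k))
      _ = 2*M := by ring
  have h2 : Summable (fun k : ℕ => (Vr N k t - Vr N k s) • c k) := by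
    apply Summable.of_norm_bounded (g := fun k => (Vr N k t + Vr N k s) * M)
      (((summable_Vr hN ht.1).add (summable_Vr hN hs.1)).mul_right M)
    intro k
    rw [norm_smul, Real.norm_eq_abs]
    have habs : |Vr N k t - Vr N k s| ≤ Vr N k t + Vr N k s := by
      rw [abs_le]
      constructor <;> nlinarith [Vr_nonneg hN ht.1 k, Vr_nonneg hN hs.1 k]
    have hnn : (0:ℝ) ≤ Vr N k t + Vr N k s :=
      add_nonneg (Vr_nonneg hN ht.1 k) (Vr_nonneg hN hs.1 k)
    exact mul_le_mul habs (hM _ (gp_mem hN hs.1 k)) (norm_nonneg _) hnn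
  have hsplit : UE N f t - UE N f s
      = (∑' k : ℕ, Vr N k t • (f (gp N k t) - f (gp N k s)))
        + ∑' k : ℕ, (Vr N k t - Vr N k s) • c k := by
    rw [UE, UE, ← Summable.tsum_sub ha hb, ← Summable.tsum_add h1 h2]
    apply tsum_congr; intro k
    rw [smul_sub, sub_smul]; abel
  rw [hsplit]
  congr 1
  have hb0 : b 0 = 0 := by
    show wr N 0 t - wr N 0 s = 0
    rw [wr_zero_eq hN ht.1, wr_zero_eq hN hs.1, sub_self]
  have hVb : ∀ k, Vr N k t - Vr N k s = b k - b (k+1) := by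
    intro k
    show _ = (wr N k t - wr N k s) - (wr N (k+1) t - wr N (k+1) s)
    rw [Vr_eq hN ht.1 k, Vr_eq hN hs.1 k]; ring
  have h3 : Summable (fun k : ℕ => b (k+1) • (c (k+1) - c k)) := by
    apply Summable.of_norm_bounded (g := fun k => ‖f (gp N (k+1) s) - f (gp N k s)‖) hsum
    intro k
    rw [norm_smul, Real.norm_eq_abs]
    have hbk : b (k+1) = wr N (k+1) t - wr N (k+1) s := rfl
    have habs1 : |b (k+1)| ≤ 1 := by
      have h1t := wr_le_one hN ht.1 (k+1); have h0t := wr_nonneg hN ht.1 (k+1)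
      have h1s := wr_le_one hN hs.1 (k+1); have h0s := wr_nonneg hN hs.1 (k+1)
      rw [hbk, abs_le]; constructor <;> linarith
    have hcc : c (k+1) - c k = f (gp N (k+1) s) - f (gp N k s) := rfl
    rw [hcc]
    calc |b (k+1)| * ‖f (gp N (k+1) s) - f (gp N k s)‖
        ≤ 1 * ‖f (gp N (k+1) s) - f (gp N k s)‖ :=
          mul_le_mul_of_nonneg_right habs1 (norm_nonneg _)
      _ = _ := one_mul _
  have hps : ∀ n : ℕ, ∑ k ∈ Finset.range n, (b k - b (k+1)) • c k
      = (∑ k ∈ Finset.range n, b (k+1) • (c (k+1) - c k)) + b 0 • c 0 - b n • c n := by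
    intro n
    induction n with
    | zero => simp
    | succ n ih =>
      rw [Finset.sum_range_succ, Finset.sum_range_succ, ih]
      simp only [sub_smul, smul_sub]
      abel
  have hblim : Tendsto (fun n => b n • c n) atTop (nhds (0:E)) := by
    apply squeeze_zero_norm (a := fun n => (wr N n t + wr N n s) * M)
    · intro n
      rw [norm_smul, Real.norm_eq_abs]
      have hbn : b n = wr N n t - wr N n s := rfl
      have habs : |b n| ≤ wr N n t + wr N n s := by
        have h0t := wr_nonneg hN ht.1 n; have h0s := wr_nonneg hN hs.1 n
        rw [hbn, abs_le]; constructor <;> linarith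
      have hnn : (0:ℝ) ≤ wr N n t + wr N n s :=
        add_nonneg (wr_nonneg hN ht.1 n) (wr_nonneg hN hs.1 n)
      exact mul_le_mul habs (hM _ (gp_mem hN hs.1 n)) (norm_nonneg _) hnn
    · have := ((wr_tendsto hN ht.1).add (wr_tendsto hN hs.1)).mul_const M
      simpa using this
  have hT1 : Tendsto (fun n => ∑ k ∈ Finset.range n, (Vr N k t - Vr N k s) • c k) atTop
      (nhds (∑' k : ℕ, (Vr N k t - Vr N k s) • c k)) :=
    (h2.hasSum_iff_tendsto_nat).mp h2.hasSum
  have hT2 : Tendsto (fun n => ∑ k ∈ Finset.range n, b (k+1) • (c (k+1) - c k)) atTop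
      (nhds (∑' k : ℕ, b (k+1) • (c (k+1) - c k))) :=
    (h3.hasSum_iff_tendsto_nat).mp h3.hasSum
  have hT2' : Tendsto (fun n => (∑ k ∈ Finset.range n, b (k+1) • (c (k+1) - c k)) - b n • c n)
      atTop (nhds ((∑' k : ℕ, b (k+1) • (c (k+1) - c k)) - 0)) := hT2.sub hblim
  rw [sub_zero] at hT2'
  have heq : (fun n => ∑ k ∈ Finset.range n, (Vr N k t - Vr N k s) • c k)
      = fun n => (∑ k ∈ Finset.range n, b (k+1) • (c (k+1) - c k)) - b n • c n := by
    funext n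
    have hcongr : ∀ k ∈ Finset.range n, (Vr N k t - Vr N k s) • c k = (b k - b (k+1)) • c k :=
      fun k _ => by rw [hVb]
    rw [Finset.sum_congr rfl hcongr, hps n, hb0, zero_smul, add_zero]
  rw [heq] at hT1
  exact tendsto_nhds_unique hT1 hT2'

noncomputable def vf (f : ℝ → E) (x : ℝ) : ℝ := (eVariationOn f (Icc x 1)).toReal

lemma var_split (f : ℝ → E) {x y : ℝ} (hxy : x ≤ y) (hy : y ≤ 1) :
    eVariationOn f (Icc x y) + eVariationOn f (Icc y 1) = eVariationOn f (Icc x 1) := by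
  have h := eVariationOn.Icc_add_Icc f (s := Icc x 1) hxy hy ⟨hxy, hy⟩
  rw [Icc_inter_Icc, Icc_inter_Icc, Icc_inter_Icc, max_self, max_eq_right hxy,
    min_eq_right hy, min_self] at h
  exact h

lemma var_Icc_ne_top {f : ℝ → E} (hf : eVariationOn f (Icc (0:ℝ) 1) ≠ ⊤) {x y : ℝ}
    (hx : 0 ≤ x) (hy : y ≤ 1) : eVariationOn f (Icc x y) ≠ ⊤ := by
  refine ne_top_of_le_ne_top hf (eVariationOn.mono f ?_)
  exact fun z hz => ⟨le_trans hx hz.1, le_trans hz.2 hy⟩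

lemma vf_nonneg (f : ℝ → E) (x : ℝ) : 0 ≤ vf f x := ENNReal.toReal_nonneg

lemma vf_incr {f : ℝ → E} (hf : eVariationOn f (Icc (0:ℝ) 1) ≠ ⊤) {x y : ℝ}
    (hx : 0 ≤ x) (hxy : x ≤ y) (hy : y ≤ 1) :
    ‖f y - f x‖ + vf f y ≤ vf f x := by
  have hsplit := var_split (f := f) hxy hy
  have hAne : eVariationOn f (Icc x y) ≠ ⊤ := var_Icc_ne_top hf hx hy
  have hBne : eVariationOn f (Icc y 1) ≠ ⊤ := var_Icc_ne_top hf (le_trans hx hxy) (le_refl _)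
  have hvx : vf f x = (eVariationOn f (Icc x y)).toReal + (eVariationOn f (Icc y 1)).toReal := by
    rw [vf, ← hsplit, ENNReal.toReal_add hAne hBne]
  have hd : ‖f y - f x‖ ≤ (eVariationOn f (Icc x y)).toReal := by
    rw [← dist_eq_norm, dist_edist]
    exact ENNReal.toReal_mono hAne
      (eVariationOn.edist_le f (x := y) (y := x) ⟨hxy, le_refl _⟩ ⟨le_refl _, hxy⟩)
  rw [hvx, vf]
  linarith

lemma vf_anti {f : ℝ → E} (hf : eVariationOn f (Icc (0:ℝ) 1) ≠ ⊤) {x y : ℝ}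
    (hx : 0 ≤ x) (hxy : x ≤ y) (hy : y ≤ 1) : vf f y ≤ vf f x := by
  have := vf_incr hf hx hxy hy
  have := norm_nonneg (f y - f x)
  linarith

lemma vf_le_v0 {f : ℝ → E} (hf : eVariationOn f (Icc (0:ℝ) 1) ≠ ⊤) {x : ℝ}
    (hx : x ∈ Icc (0:ℝ) 1) : vf f x ≤ vf f 0 := vf_anti hf (le_refl _) hx.1 hx.2

lemma vf_bound {f : ℝ → E} (hf : eVariationOn f (Icc (0:ℝ) 1) ≠ ⊤) :
    ∀ x ∈ Icc (0:ℝ) 1, ‖vf f x‖ ≤ vf f 0 := by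
  intro x hx
  rw [Real.norm_eq_abs, abs_of_nonneg (vf_nonneg f x)]
  exact vf_le_v0 hf hx

lemma summable_vf_inc (hN : 1 ≤ N) {f : ℝ → E} (hf : eVariationOn f (Icc (0:ℝ) 1) ≠ ⊤)
    (hs : s ∈ Icc (0:ℝ) 1) :
    Summable fun k : ℕ => ‖vf f (gp N (k+1) s) - vf f (gp N k s)‖ := by
  apply summable_of_sum_range_le (c := vf f 0) (fun _ => norm_nonneg _)
  intro n
  have hterm : ∀ k ∈ Finset.range n, ‖vf f (gp N (k+1) s) - vf f (gp N k s)‖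
      = vf f (gp N (k+1) s) - vf f (gp N k s) := by
    intro k _
    rw [Real.norm_eq_abs, abs_of_nonneg]
    have h1 := gp_mem hN hs.1 (k+1)
    have h2 := gp_mem hN hs.1 k
    have := vf_anti hf h1.1 (gp_anti_k hN hs.1 (Nat.le_succ k)) h2.2
    linarith
  rw [Finset.sum_congr rfl hterm, Finset.sum_range_sub (fun k => vf f (gp N k s)) n]
  have h1 := vf_le_v0 hf (gp_mem hN hs.1 n)
  have h2 := vf_nonneg f (gp N 0 s)
  linarith

lemma dominate (hN : 1 ≤ N) {f : ℝ → E} (hf : eVariationOn f (Icc (0:ℝ) 1) ≠ ⊤)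
    (hs : s ∈ Icc (0:ℝ) 1) (ht : t ∈ Icc (0:ℝ) 1) (hst : s ≤ t) :
    ‖UE N f t - UE N f s‖ ≤ UE N (vf f) t - UE N (vf f) s := by
  set v : ℝ → ℝ := vf f with hv_def
  have hMf := fun x hx => norm_le_of_BV hf (x := x) hx
  have hMv := vf_bound hf
  have idf := key_identity hN hMf (summable_inc hN hf hs) hs ht
  have idv := key_identity (E := ℝ) hN hMv (summable_vf_inc hN hf hs) hs ht
  -- pointwise bounds
  have bound1 : ∀ k : ℕ, ‖Vr N k t • (f (gp N k t) - f (gp N k s))‖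
      ≤ Vr N k t * (v (gp N k t) - v (gp N k s)) := by
    intro k
    rw [norm_smul, Real.norm_eq_abs, abs_of_nonneg (Vr_nonneg hN ht.1 k)]
    refine mul_le_mul_of_nonneg_left ?_ (Vr_nonneg hN ht.1 k)
    have h1 := gp_mem hN ht.1 k
    have h2 := gp_mem hN hs.1 k
    have hord := gp_anti_s hN hs.1 hst k
    have := vf_incr hf h1.1 hord h2.2
    rw [norm_sub_rev]
    linarith
  have bound2 : ∀ k : ℕ, ‖(wr N (k+1) t - wr N (k+1) s) • (f (gp N (k+1) s) - f (gp N k s))‖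
      ≤ (wr N (k+1) t - wr N (k+1) s) * (v (gp N (k+1) s) - v (gp N k s)) := by
    intro k
    have hbnn : 0 ≤ wr N (k+1) t - wr N (k+1) s := by
      have := wr_mono_s hN hs.1 hst (k+1); linarith
    rw [norm_smul, Real.norm_eq_abs, abs_of_nonneg hbnn]
    refine mul_le_mul_of_nonneg_left ?_ hbnn
    have h1 := gp_mem hN hs.1 (k+1)
    have h2 := gp_mem hN hs.1 k
    have hord := gp_anti_k hN hs.1 (Nat.le_succ k)
    have := vf_incr hf h1.1 hord h2.2
    rw [norm_sub_rev]
    linarith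
  -- summability of the majorant series
  have hv1 : Summable (fun k : ℕ => Vr N k t * (v (gp N k t) - v (gp N k s))) := by
    apply Summable.of_norm_bounded (g := fun k => Vr N k t * (2 * v 0))
      ((summable_Vr hN ht.1).mul_right _)
    intro k
    rw [Real.norm_eq_abs, abs_mul, abs_of_nonneg (Vr_nonneg hN ht.1 k)]
    refine mul_le_mul_of_nonneg_left ?_ (Vr_nonneg hN ht.1 k)
    have b1 := hMv _ (gp_mem hN ht.1 k)
    have b2 := hMv _ (gp_mem hN hs.1 k)
    rw [Real.norm_eq_abs] at b1 b2
    calc |v (gp N k t) - v (gp N k s)| ≤ |v (gp N k t)| + |v (gp N k s)| := abs_sub _ _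
      _ ≤ 2 * v 0 := by rw [hv_def] at *; linarith
  have hv2 : Summable (fun k : ℕ =>
      (wr N (k+1) t - wr N (k+1) s) * (v (gp N (k+1) s) - v (gp N k s))) := by
    apply Summable.of_norm_bounded (g := fun k => ‖v (gp N (k+1) s) - v (gp N k s)‖)
      (summable_vf_inc hN hf hs)
    intro k
    rw [Real.norm_eq_abs, abs_mul]
    have h1t := wr_le_one hN ht.1 (k+1); have h0t := wr_nonneg hN ht.1 (k+1)
    have h1s := wr_le_one hN hs.1 (k+1); have h0s := wr_nonneg hN hs.1 (k+1)
    have habs1 : |wr N (k+1) t - wr N (k+1) s| ≤ 1 := by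
      rw [abs_le]; constructor <;> linarith
    calc |wr N (k+1) t - wr N (k+1) s| * |v (gp N (k+1) s) - v (gp N k s)|
        ≤ 1 * |v (gp N (k+1) s) - v (gp N k s)| :=
          mul_le_mul_of_nonneg_right habs1 (abs_nonneg _)
      _ = ‖v (gp N (k+1) s) - v (gp N k s)‖ := by rw [one_mul, Real.norm_eq_abs]
  have hn1 : Summable (fun k : ℕ => ‖Vr N k t • (f (gp N k t) - f (gp N k s))‖) :=
    Summable.of_nonneg_of_le (fun _ => norm_nonneg _) bound1 hv1
  have hn2 : Summable (fun k : ℕ =>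
      ‖(wr N (k+1) t - wr N (k+1) s) • (f (gp N (k+1) s) - f (gp N k s))‖) :=
    Summable.of_nonneg_of_le (fun _ => norm_nonneg _) bound2 hv2
  rw [idf]
  have idv' : UE N v t - UE N v s
      = (∑' k : ℕ, Vr N k t * (v (gp N k t) - v (gp N k s)))
        + ∑' k : ℕ, (wr N (k+1) t - wr N (k+1) s) * (v (gp N (k+1) s) - v (gp N k s)) := by
    rw [idv]; simp only [smul_eq_mul]; rfl
  calc ‖(∑' k : ℕ, Vr N k t • (f (gp N k t) - f (gp N k s)))
        + ∑' k : ℕ, (wr N (k+1) t - wr N (k+1) s) • (f (gp N (k+1) s) - f (gp N k s))‖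
      ≤ ‖∑' k : ℕ, Vr N k t • (f (gp N k t) - f (gp N k s))‖
        + ‖∑' k : ℕ, (wr N (k+1) t - wr N (k+1) s) • (f (gp N (k+1) s) - f (gp N k s))‖ :=
        norm_add_le _ _
    _ ≤ (∑' k : ℕ, ‖Vr N k t • (f (gp N k t) - f (gp N k s))‖)
        + ∑' k : ℕ, ‖(wr N (k+1) t - wr N (k+1) s) • (f (gp N (k+1) s) - f (gp N k s))‖ :=
        add_le_add (norm_tsum_le_tsum_norm hn1) (norm_tsum_le_tsum_norm hn2)
    _ ≤ (∑' k : ℕ, Vr N k t * (v (gp N k t) - v (gp N k s)))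
        + ∑' k : ℕ, (wr N (k+1) t - wr N (k+1) s) * (v (gp N (k+1) s) - v (gp N k s)) :=
        add_le_add (Summable.tsum_le_tsum bound1 hn1 hv1) (Summable.tsum_le_tsum bound2 hn2 hv2)
    _ = UE N v t - UE N v s := idv'.symm

lemma hasSum_D (hN : 1 ≤ N) :
    HasSum (fun k : ℕ => 1/(((N:ℝ)+1+k)*((N:ℝ)+2+k))) (1/((N:ℝ)+1)) := by
  have hNp : (1:ℝ) ≤ N := Ncast_pos hN
  have hek : ∀ k : ℕ, (1:ℝ)/(((N:ℝ)+1+k)*((N:ℝ)+2+k)) = ((N:ℝ)+1+k)⁻¹ - ((N:ℝ)+1+(k+1))⁻¹ := by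
    intro k
    have hk : (0:ℝ) ≤ k := Nat.cast_nonneg k
    have h1 : ((N:ℝ)+1+k) ≠ 0 := by linarith
    have h2 : ((N:ℝ)+2+k) ≠ 0 := by linarith
    have h3 : ((N:ℝ)+1+((k:ℝ)+1)) ≠ 0 := by linarith
    rw [inv_sub_inv h1 h3,
      show ((N:ℝ)+1+((k:ℝ)+1)) - ((N:ℝ)+1+k) = 1 by ring,
      show ((N:ℝ)+1+(k:ℝ))*((N:ℝ)+1+((k:ℝ)+1)) = ((N:ℝ)+1+k)*((N:ℝ)+2+k) by ring]
  have hnn : ∀ k : ℕ, (0:ℝ) ≤ 1/(((N:ℝ)+1+k)*((N:ℝ)+2+k)) := by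
    intro k
    have hk : (0:ℝ) ≤ k := Nat.cast_nonneg k
    have h1 : (0:ℝ) < ((N:ℝ)+1+k) := by linarith
    have h2 : (0:ℝ) < ((N:ℝ)+2+k) := by linarith
    positivity
  have hps : ∀ n : ℕ, ∑ k ∈ Finset.range n, 1/(((N:ℝ)+1+k)*((N:ℝ)+2+k))
      = ((N:ℝ)+1)⁻¹ - ((N:ℝ)+1+n)⁻¹ := by
    intro n
    have : ∀ k ∈ Finset.range n, (1:ℝ)/(((N:ℝ)+1+k)*((N:ℝ)+2+k))
        = (fun j : ℕ => ((N:ℝ)+1+j)⁻¹) k - (fun j : ℕ => ((N:ℝ)+1+j)⁻¹) (k+1) := by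
      intro k _
      rw [hek k]
      push_cast
      ring_nf
    rw [Finset.sum_congr rfl this, Finset.sum_range_sub' (fun j : ℕ => ((N:ℝ)+1+j)⁻¹) n]
    norm_num
  have hel : Tendsto (fun n : ℕ => ((N:ℝ)+1+n)⁻¹) atTop (nhds 0) := by
    have h : Tendsto (fun n : ℕ => (N:ℝ)+1+n) atTop atTop :=
      tendsto_atTop_add_const_left _ _ tendsto_natCast_atTop_atTop
    exact h.inv_tendsto_atTop
  have hsummable : Summable (fun k : ℕ => 1/(((N:ℝ)+1+k)*((N:ℝ)+2+k))) := by
    apply summable_of_sum_range_le (c := ((N:ℝ)+1)⁻¹) hnn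
    intro n
    rw [hps n]
    have : (0:ℝ) ≤ ((N:ℝ)+1+n)⁻¹ := by
      have hk : (0:ℝ) ≤ n := Nat.cast_nonneg n
      positivity
    linarith
  rw [hsummable.hasSum_iff_tendsto_nat]
  simp only [hps]
  have h := hel.const_sub (((N:ℝ)+1)⁻¹)
  rw [sub_zero] at h
  rw [one_div]
  exact h

set_option maxHeartbeats 1000000 in
lemma endpoint (hN : 1 ≤ N) {f : ℝ → E} (hf : eVariationOn f (Icc (0:ℝ) 1) ≠ ⊤) :
    UE N (vf f) 1 - UE N (vf f) 0 ≤ (1/((N:ℝ)+1)) * vf f 0 := by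
  have hNp : (1:ℝ) ≤ N := Ncast_pos hN
  have hMv := vf_bound hf
  have hA' : Summable (fun k : ℕ => Vr N k 1 • vf f (gp N k 1)) :=
    summable_term hN zero_le_one hMv
  have hAeq : (fun k : ℕ => Vr N k 1 * vf f (gp N (k+1) 0))
      = fun k : ℕ => Vr N k 1 • vf f (gp N k 1) := by
    funext k; rw [gp_one_eq, smul_eq_mul]
  have hA : Summable (fun k : ℕ => Vr N k 1 * vf f (gp N (k+1) 0)) := by
    rw [hAeq]; exact hA'
  have hB' : Summable (fun k : ℕ => Vr N k 0 * vf f (gp N k 0)) := by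
    have := summable_term hN (le_refl (0:ℝ)) hMv
    simpa [smul_eq_mul] using this
  have hB : Summable (fun k : ℕ => Vr N (k+1) 0 * vf f (gp N (k+1) 0)) :=
    (summable_nat_add_iff 1).mpr hB'
  have hUE1 : UE N (vf f) 1 = ∑' k : ℕ, Vr N k 1 * vf f (gp N (k+1) 0) := by
    rw [UE]; exact (tsum_congr fun k => by rw [gp_one_eq, smul_eq_mul]).symm
  have hUE0 : UE N (vf f) 0
      = Vr N 0 0 * vf f (gp N 0 0) + ∑' k : ℕ, Vr N (k+1) 0 * vf f (gp N (k+1) 0) := by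
    rw [UE]
    simp only [smul_eq_mul]
    exact Summable.tsum_eq_zero_add hB'
  have hD : ∀ k : ℕ, Vr N k 1 - Vr N (k+1) 0 = 1/(((N:ℝ)+1+k)*((N:ℝ)+2+k)) := by
    intro k
    have hk : (0:ℝ) ≤ k := Nat.cast_nonneg k
    have hd1 : ((N:ℝ)+1+k) ≠ 0 := by linarith
    have hd2 : ((N:ℝ)+2+k) ≠ 0 := by linarith
    have e1 : Vr N k 1 = ((N:ℝ)+1)/(((N:ℝ)+1+k)*((N:ℝ)+2+k)) := by
      simp only [Vr]
      push_cast
      ring_nf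
    have e2 : Vr N (k+1) 0 = (N:ℝ)/(((N:ℝ)+1+k)*((N:ℝ)+2+k)) := by
      simp only [Vr]
      push_cast
      ring_nf
    rw [e1, e2, div_sub_div_same, show ((N:ℝ)+1) - N = 1 by ring]
  have heq : UE N (vf f) 1 - UE N (vf f) 0
      = (∑' k : ℕ, (1/(((N:ℝ)+1+k)*((N:ℝ)+2+k))) * vf f (gp N (k+1) 0))
        - Vr N 0 0 * vf f (gp N 0 0) := by
    rw [hUE1, hUE0, sub_add_eq_sub_sub, sub_right_comm, ← Summable.tsum_sub hA hB]
    congr 1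
    apply tsum_congr
    intro k
    rw [← sub_mul, hD]
  have hsumS : Summable (fun k : ℕ => (1/(((N:ℝ)+1+k)*((N:ℝ)+2+k))) * vf f (gp N (k+1) 0)) := by
    have h := hA.sub hB
    have he : (fun k : ℕ => Vr N k 1 * vf f (gp N (k+1) 0) - Vr N (k+1) 0 * vf f (gp N (k+1) 0))
        = fun k : ℕ => (1/(((N:ℝ)+1+k)*((N:ℝ)+2+k))) * vf f (gp N (k+1) 0) :=
      funext fun k => by rw [← sub_mul, hD]
    rwa [he] at h
  have hsumR : Summable (fun k : ℕ => (1/(((N:ℝ)+1+k)*((N:ℝ)+2+k))) * vf f 0) :=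
    (hasSum_D hN).summable.mul_right _
  have hS : (∑' k : ℕ, (1/(((N:ℝ)+1+k)*((N:ℝ)+2+k))) * vf f (gp N (k+1) 0))
      ≤ (1/((N:ℝ)+1)) * vf f 0 := by
    have hle : ∀ k : ℕ, (1/(((N:ℝ)+1+k)*((N:ℝ)+2+k))) * vf f (gp N (k+1) 0)
        ≤ (1/(((N:ℝ)+1+k)*((N:ℝ)+2+k))) * vf f 0 := by
      intro k
      have hk : (0:ℝ) ≤ k := Nat.cast_nonneg k
      have h1 : (0:ℝ) < ((N:ℝ)+1+k) := by linarith
      have h2 : (0:ℝ) < ((N:ℝ)+2+k) := by linarith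
      exact mul_le_mul_of_nonneg_left (vf_le_v0 hf (gp_mem hN (le_refl (0:ℝ)) (k+1)))
        (by positivity)
    calc (∑' k : ℕ, (1/(((N:ℝ)+1+k)*((N:ℝ)+2+k))) * vf f (gp N (k+1) 0))
        ≤ ∑' k : ℕ, (1/(((N:ℝ)+1+k)*((N:ℝ)+2+k))) * vf f 0 := Summable.tsum_le_tsum hle hsumS hsumR
      _ = (1/((N:ℝ)+1)) * vf f 0 := by rw [tsum_mul_right, (hasSum_D hN).tsum_eq]
  have hnn : 0 ≤ Vr N 0 0 * vf f (gp N 0 0) :=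
    mul_nonneg (Vr_nonneg hN (le_refl _) 0) (vf_nonneg f _)
  rw [heq]
  linarith

lemma UEv_mono (hN : 1 ≤ N) {f : ℝ → E} (hf : eVariationOn f (Icc (0:ℝ) 1) ≠ ⊤)
    (hs : s ∈ Icc (0:ℝ) 1) (ht : t ∈ Icc (0:ℝ) 1) (hst : s ≤ t) :
    UE N (vf f) s ≤ UE N (vf f) t := by
  have h := dominate hN hf hs ht hst
  have h2 := norm_nonneg (UE N f t - UE N f s)
  linarith

end Op

lemma Uop_eq_UE (N : ℕ) (f : ℝ → ℂ) : Uop N f = UE N f := by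
  funext s
  simp only [Uop, UE]
  apply tsum_congr; intro k
  have h : ((N + k : ℕ) : ℝ) = (N:ℝ) + k := by push_cast; ring
  have e : s + ((N:ℝ) + k) = s + (N:ℝ) + k := by ring
  rw [h, e, Complex.real_smul]
  simp only [Vr, gp]

lemma step_var {N : ℕ} (hN : 1 ≤ N) {f : ℝ → ℂ} (hf : eVariationOn f (Icc (0:ℝ) 1) ≠ ⊤) :
    eVariationOn (Uop N f) (Icc (0:ℝ) 1)
      ≤ ((N:ℝ≥0∞)+1)⁻¹ * eVariationOn f (Icc (0:ℝ) 1) := by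
  rw [Uop_eq_UE]
  have key : eVariationOn (UE N f) (Icc (0:ℝ) 1)
      ≤ ENNReal.ofReal ((1/((N:ℝ)+1)) * vf f 0) := by
    unfold eVariationOn
    apply iSup_le
    rintro ⟨n, u, hu, hus⟩
    calc ∑ i ∈ Finset.range n, edist (UE N f (u (i+1))) (UE N f (u i))
        ≤ ∑ i ∈ Finset.range n, ENNReal.ofReal (UE N (vf f) (u (i+1)) - UE N (vf f) (u i)) := by
          apply Finset.sum_le_sum
          intro i _
          rw [edist_dist]
          apply ENNReal.ofReal_le_ofReal
          rw [dist_eq_norm]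
          exact dominate hN hf (hus i) (hus (i+1)) (hu (Nat.le_succ i))
      _ = ENNReal.ofReal (∑ i ∈ Finset.range n,
            (UE N (vf f) (u (i+1)) - UE N (vf f) (u i))) :=
          (ENNReal.ofReal_sum_of_nonneg (fun i _ => by
            have h := dominate hN hf (hus i) (hus (i+1)) (hu (Nat.le_succ i))
            have h2 := norm_nonneg (UE N f (u (i+1)) - UE N f (u i))
            linarith)).symm
      _ = ENNReal.ofReal (UE N (vf f) (u n) - UE N (vf f) (u 0)) := by
          rw [Finset.sum_range_sub (fun i => UE N (vf f) (u i))]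
      _ ≤ ENNReal.ofReal (UE N (vf f) 1 - UE N (vf f) 0) := by
          apply ENNReal.ofReal_le_ofReal
          have h1 := UEv_mono hN hf (hus n) ⟨zero_le_one, le_refl (1:ℝ)⟩ (hus n).2
          have h2 := UEv_mono hN hf ⟨le_refl (0:ℝ), zero_le_one⟩ (hus 0) (hus 0).1
          linarith
      _ ≤ ENNReal.ofReal ((1/((N:ℝ)+1)) * vf f 0) :=
          ENNReal.ofReal_le_ofReal (endpoint hN hf)
  refine le_trans key (le_of_eq ?_)
  have hNpos : (0:ℝ) < (N:ℝ)+1 := by positivity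
  rw [ENNReal.ofReal_mul (by positivity)]
  have h1 : ENNReal.ofReal (vf f 0) = eVariationOn f (Icc (0:ℝ) 1) := by
    rw [vf, ENNReal.ofReal_toReal hf]
  have h2 : ENNReal.ofReal (1/((N:ℝ)+1)) = ((N:ℝ≥0∞)+1)⁻¹ := by
    rw [one_div, ENNReal.ofReal_inv_of_pos hNpos]
    congr 1
    rw [ENNReal.ofReal_add (by positivity) zero_le_one, ENNReal.ofReal_natCast,
      ENNReal.ofReal_one]
  rw [h1, h2]

section Meas

lemma decomp_of_BV {f : ℝ → ℂ} (hf : eVariationOn f (Icc (0:ℝ) 1) ≠ ⊤) :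
    ∃ p q r t : ℝ → ℝ, MonotoneOn p (Icc (0:ℝ) 1) ∧ MonotoneOn q (Icc (0:ℝ) 1) ∧
      MonotoneOn r (Icc (0:ℝ) 1) ∧ MonotoneOn t (Icc (0:ℝ) 1) ∧
      ∀ x : ℝ, f x = ((p x - q x : ℝ) : ℂ) + ((r x - t x : ℝ) : ℂ) * Complex.I := by
  have hre : eVariationOn (fun x => (f x).re) (Icc (0:ℝ) 1) ≠ ⊤ := by
    have hlip := (Complex.reCLM.lipschitz).lipschitzOnWith (s := (univ : Set ℂ))
    have h := hlip.comp_eVariationOn_le (mapsTo_univ f (Icc (0:ℝ) 1))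
    exact ne_top_of_le_ne_top (ENNReal.mul_ne_top ENNReal.coe_ne_top hf) h
  have him : eVariationOn (fun x => (f x).im) (Icc (0:ℝ) 1) ≠ ⊤ := by
    have hlip := (Complex.imCLM.lipschitz).lipschitzOnWith (s := (univ : Set ℂ))
    have h := hlip.comp_eVariationOn_le (mapsTo_univ f (Icc (0:ℝ) 1))
    exact ne_top_of_le_ne_top (ENNReal.mul_ne_top ENNReal.coe_ne_top hf) h
  obtain ⟨p, q, hp, hq, hpq⟩ :=
    (BoundedVariationOn.locallyBoundedVariationOn hre).exists_monotoneOn_sub_monotoneOn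
  obtain ⟨r, t, hr, ht, hrt⟩ :=
    (BoundedVariationOn.locallyBoundedVariationOn him).exists_monotoneOn_sub_monotoneOn
  refine ⟨p, q, r, t, hp, hq, hr, ht, fun x => ?_⟩
  have h1 : (f x).re = p x - q x := congrFun hpq x
  have h2 : (f x).im = r x - t x := congrFun hrt x
  rw [← h1, ← h2, Complex.re_add_im]

lemma aemeasurable_comp_of_BV {N : ℕ} (hN : 1 ≤ N) {f : ℝ → ℂ}
    (hf : eVariationOn f (Icc (0:ℝ) 1) ≠ ⊤) (k : ℕ) :
    AEMeasurable (fun x => f (gp N k x)) (volume.restrict (Icc (0:ℝ) 1)) := by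
  obtain ⟨p, q, r, t, hp, hq, hr, ht, hpq⟩ := decomp_of_BV hf
  have hmaps : ∀ x ∈ Icc (0:ℝ) 1, gp N k x ∈ Icc (0:ℝ) 1 := fun x hx => gp_mem hN hx.1 k
  have hanti : ∀ {u : ℝ → ℝ}, MonotoneOn u (Icc (0:ℝ) 1) →
      AEMeasurable (fun x => u (gp N k x)) (volume.restrict (Icc (0:ℝ) 1)) := by
    intro u hu
    apply aemeasurable_restrict_of_antitoneOn measurableSet_Icc
    intro x hx y hy hxy
    exact hu (hmaps y hy) (hmaps x hx) (gp_anti_s hN hx.1 hxy k)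
  have heq : (fun x => f (gp N k x)) = fun x =>
      ((p (gp N k x) - q (gp N k x) : ℝ) : ℂ)
        + ((r (gp N k x) - t (gp N k x) : ℝ) : ℂ) * Complex.I := by
    funext x; exact hpq (gp N k x)
  rw [heq]
  apply AEMeasurable.add
  · exact (Complex.measurable_ofReal.comp_aemeasurable ((hanti hp).sub (hanti hq)))
  · exact (Complex.measurable_ofReal.comp_aemeasurable ((hanti hr).sub (hanti ht))).mul_const _

lemma aemeasurable_of_BV {f : ℝ → ℂ} (hf : eVariationOn f (Icc (0:ℝ) 1) ≠ ⊤) :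
    AEMeasurable f (volume.restrict (Icc (0:ℝ) 1)) := by
  obtain ⟨p, q, r, t, hp, hq, hr, ht, hpq⟩ := decomp_of_BV hf
  have hmono : ∀ {u : ℝ → ℝ}, MonotoneOn u (Icc (0:ℝ) 1) →
      AEMeasurable u (volume.restrict (Icc (0:ℝ) 1)) := fun hu =>
    aemeasurable_restrict_of_monotoneOn measurableSet_Icc hu
  have heq : f = fun x =>
      ((p x - q x : ℝ) : ℂ) + ((r x - t x : ℝ) : ℂ) * Complex.I := funext fun x => hpq x
  rw [heq]
  apply AEMeasurable.add
  · exact (Complex.measurable_ofReal.comp_aemeasurable ((hmono hp).sub (hmono hq)))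
  · exact (Complex.measurable_ofReal.comp_aemeasurable ((hmono hr).sub (hmono ht))).mul_const _

lemma integrableOn_of_bounded_aemeas {g : ℝ → ℂ} {M : ℝ}
    (hmeas : AEMeasurable g (volume.restrict (Icc (0:ℝ) 1)))
    (hbd : ∀ x ∈ Icc (0:ℝ) 1, ‖g x‖ ≤ M) :
    IntegrableOn g (Icc (0:ℝ) 1) volume := by
  apply Integrable.mono' (integrable_const M) hmeas.aestronglyMeasurable
  rw [ae_restrict_iff' measurableSet_Icc]
  exact Filter.Eventually.of_forall hbd

lemma log_pos_N {N : ℕ} (hN : 1 ≤ N) : 0 < Real.log (((N:ℝ)+1)/N) := by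
  have hNp : (1:ℝ) ≤ (N:ℝ) := by exact_mod_cast hN
  apply Real.log_pos
  rw [lt_div_iff₀ (by linarith)]
  linarith

lemma integral_inv_Icc {N : ℕ} (hN : 1 ≤ N) :
    ∫ x in Icc (0:ℝ) 1, (x+(N:ℝ))⁻¹ = Real.log (((N:ℝ)+1)/N) := by
  have hNp : (1:ℝ) ≤ (N:ℝ) := by exact_mod_cast hN
  rw [integral_Icc_eq_integral_Ioc, ← intervalIntegral.integral_of_le zero_le_one]
  have h := intervalIntegral.integral_comp_add_right (a := (0:ℝ)) (b := 1)
    (fun x => x⁻¹) (N:ℝ)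
  rw [h, integral_inv]
  · norm_num [add_comm]
  · rw [Set.uIcc_of_le (by linarith)]
    rintro ⟨h1, h2⟩
    linarith

lemma GN_prob {N : ℕ} (hN : 1 ≤ N) : IsProbabilityMeasure (GN N) := by
  constructor
  have hNp : (1:ℝ) ≤ (N:ℝ) := by exact_mod_cast hN
  set L := Real.log (((N:ℝ)+1)/N) with hL_def
  have hL : 0 < L := log_pos_N hN
  rw [GN, withDensity_apply _ MeasurableSet.univ, Measure.restrict_univ]
  have hint : Integrable (fun x => L⁻¹ * (x+(N:ℝ))⁻¹) (volume.restrict (Icc (0:ℝ) 1)) := by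
    apply ContinuousOn.integrableOn_Icc
    apply ContinuousOn.mul continuousOn_const
    apply ContinuousOn.inv₀ (by fun_prop)
    intro x hx hc
    simp only [Set.mem_Icc] at hx
    nlinarith [hx.1]
  have hnn : 0 ≤ᶠ[ae (volume.restrict (Icc (0:ℝ) 1))] fun x => L⁻¹ * (x+(N:ℝ))⁻¹ := by
    rw [Filter.EventuallyLE, ae_restrict_iff' measurableSet_Icc]
    apply Filter.Eventually.of_forall
    intro x hx
    have h1 : (0:ℝ) ≤ x := hx.1
    have : (0:ℝ) < x + N := by linarith
    positivity
  rw [← ofReal_integral_eq_lintegral_ofReal hint hnn]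
  rw [MeasureTheory.integral_const_mul L⁻¹, integral_inv_Icc hN, ← hL_def,
    inv_mul_cancel₀ hL.ne']
  exact ENNReal.ofReal_one

lemma integral_GN {N : ℕ} (hN : 1 ≤ N) (g : ℝ → ℂ) :
    ∫ x, g x ∂(GN N)
      = ∫ x in Icc (0:ℝ) 1, ((Real.log (((N:ℝ)+1)/N))⁻¹ * (x+(N:ℝ))⁻¹) • g x := by
  set L := Real.log (((N:ℝ)+1)/N) with hL_def
  have hmeas : Measurable fun x : ℝ => Real.toNNReal (L⁻¹ * (x+(N:ℝ))⁻¹) :=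
    (measurable_const.mul ((measurable_id.add_const _).inv)).real_toNNReal
  have hGN : GN N = (volume.restrict (Icc (0:ℝ) 1)).withDensity
      (fun x => (Real.toNNReal (L⁻¹ * (x+(N:ℝ))⁻¹) : ℝ≥0∞)) := by
    rw [GN]
    congr 1
  rw [hGN, integral_withDensity_eq_integral_smul hmeas]
  apply integral_congr_ae
  filter_upwards [ae_restrict_mem measurableSet_Icc] with x hx
  have hNp : (1:ℝ) ≤ (N:ℝ) := by exact_mod_cast hN
  have h1 : (0:ℝ) ≤ x := hx.1
  have hpos : (0:ℝ) < x + N := by linarith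
  have hL : 0 < L := log_pos_N hN
  have hnn : 0 ≤ L⁻¹ * (x+(N:ℝ))⁻¹ := by positivity
  rw [NNReal.smul_def, Real.coe_toNNReal _ hnn]

lemma gp_zero_eval {N : ℕ} (k : ℕ) : gp N k 0 = (N:ℝ)/((N:ℝ)+k) := by
  simp only [gp]; rw [zero_add]

lemma gp_zero_eval' {N : ℕ} (k : ℕ) : gp N (k+1) 0 = (N:ℝ)/((N:ℝ)+k+1) := by
  rw [gp_zero_eval]; push_cast; ring_nf

lemma gp_strict_anti {N : ℕ} (hN : 1 ≤ N) {x y : ℝ} (hx : 0 ≤ x) (hxy : x < y) (k : ℕ) :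
    gp N k y < gp N k x := by
  have h1 := den_pos hN hx k
  have hNp : (1:ℝ) ≤ N := Ncast_pos hN
  exact div_lt_div_of_pos_left (by linarith) h1 (by linarith)

lemma gp_image {N : ℕ} (hN : 1 ≤ N) (k : ℕ) :
    gp N k '' Ico (0:ℝ) 1 = Ioc (gp N (k+1) 0) (gp N k 0) := by
  have hNp : (1:ℝ) ≤ N := Ncast_pos hN
  ext y
  constructor
  · rintro ⟨x, hx, rfl⟩
    constructor
    · rw [← gp_one_eq]
      exact gp_strict_anti hN hx.1 hx.2 k
    · exact gp_anti_s hN (le_refl (0:ℝ)) hx.1 k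
  · rintro ⟨h1, h2⟩
    have hy0 : 0 < y := lt_trans (gp_pos hN (le_refl (0:ℝ)) (k+1)) h1
    rw [gp_zero_eval'] at h1
    rw [gp_zero_eval] at h2
    have hd1 : (0:ℝ) < (N:ℝ)+k := by
      have : (0:ℝ) ≤ k := Nat.cast_nonneg k
      linarith
    have hd2 : (0:ℝ) < (N:ℝ)+k+1 := by linarith
    -- from h2 : y ≤ N/(N+k) : (N+k) * y ≤ N
    have hyle : ((N:ℝ)+k) * y ≤ N := by
      rw [le_div_iff₀ hd1] at h2
      linarith [h2]
    -- from h1 : N/(N+k+1) < y : N < (N+k+1) * y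
    have hylt : (N:ℝ) < ((N:ℝ)+k+1) * y := by
      rw [div_lt_iff₀ hd2] at h1
      linarith [h1]
    refine ⟨(N:ℝ)/y - ((N:ℝ)+k), ⟨?_, ?_⟩, ?_⟩
    · rw [sub_nonneg, le_div_iff₀ hy0]
      exact hyle
    · rw [sub_lt_iff_lt_add, div_lt_iff₀ hy0]
      calc (N:ℝ) < ((N:ℝ)+k+1) * y := hylt
        _ = (1 + ((N:ℝ)+k)) * y := by ring
    · show (N:ℝ) / ((N:ℝ)/y - ((N:ℝ)+k) + N + k) = y
      rw [show (N:ℝ)/y - ((N:ℝ)+k) + N + k = (N:ℝ)/y by ring]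
      field_simp

lemma gp_hasDeriv {N : ℕ} (hN : 1 ≤ N) (k : ℕ) {x : ℝ} (hx : 0 ≤ x) :
    HasDerivAt (gp N k) (-(N:ℝ)/((x+(N:ℝ)+k)^2)) x := by
  have hd := den_pos hN hx k
  have h1 : HasDerivAt (fun x : ℝ => x + (N:ℝ) + k) 1 x :=
    ((hasDerivAt_id x).add_const (N:ℝ)).add_const (k:ℝ)
  have h2 := h1.inv hd.ne'
  have h3 := h2.const_mul (N:ℝ)
  have he : (fun x : ℝ => (N:ℝ) * (x + (N:ℝ) + k)⁻¹) = gp N k := by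
    funext z; simp only [gp, div_eq_mul_inv]
  simp only [Pi.inv_apply] at h3
  rw [he] at h3
  rw [show -(N:ℝ)/((x+(N:ℝ)+k)^2) = (N:ℝ) * (-1/((x+(N:ℝ)+k)^2)) by ring]
  exact h3

lemma gp_injOn {N : ℕ} (hN : 1 ≤ N) (k : ℕ) : InjOn (gp N k) (Ico (0:ℝ) 1) := by
  have : StrictAntiOn (gp N k) (Ico (0:ℝ) 1) := fun x hx y _ hxy =>
    gp_strict_anti hN hx.1 hxy k
  exact this.injOn

lemma iUnion_Ioc_gp {N : ℕ} (hN : 1 ≤ N) :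
    (⋃ k : ℕ, Ioc (gp N (k+1) 0) (gp N k 0)) = Ioc (0:ℝ) 1 := by
  have hNp : (1:ℝ) ≤ N := Ncast_pos hN
  have hgp00 : gp N 0 0 = 1 := by
    rw [gp_zero_eval]; push_cast; rw [add_zero, div_self (by linarith)]
  ext y
  simp only [mem_iUnion]
  constructor
  · rintro ⟨k, h1, h2⟩
    exact ⟨lt_trans (gp_pos hN (le_refl (0:ℝ)) (k+1)) h1,
      le_trans h2 (by rw [← hgp00]; exact gp_anti_k hN (le_refl (0:ℝ)) (Nat.zero_le k))⟩
  · rintro ⟨hy0, hy1⟩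
    have hex : ∃ k : ℕ, gp N k 0 < y := by
      obtain ⟨n, hn⟩ := exists_nat_gt ((N:ℝ)/y)
      refine ⟨n, ?_⟩
      rw [gp_zero_eval, div_lt_iff₀ (by positivity)]
      have h2 : (N:ℝ) < y * n := by
        rw [div_lt_iff₀ hy0] at hn
        linarith
      have h3 : 0 ≤ y * (N:ℝ) := by positivity
      nlinarith
    classical
    set k₀ := Nat.find hex with hk0_def
    have hspec : gp N k₀ 0 < y := Nat.find_spec hex
    have hk0ne : k₀ ≠ 0 := by
      intro hc
      rw [hc, hgp00] at hspec
      linarith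
    obtain ⟨m, hm⟩ : ∃ m, k₀ = m + 1 := ⟨k₀ - 1, by omega⟩
    refine ⟨m, by rw [← hm]; exact hspec, ?_⟩
    have := Nat.find_min hex (m := m) (by omega)
    linarith [not_lt.mp this]

lemma pairwise_disj_gp {N : ℕ} (hN : 1 ≤ N) :
    Pairwise (Function.onFun Disjoint fun k : ℕ => Ioc (gp N (k+1) 0) (gp N k 0)) := by
  have key : ∀ i j : ℕ, i < j →
      Disjoint (Ioc (gp N (i+1) 0) (gp N i 0)) (Ioc (gp N (j+1) 0) (gp N j 0)) := by
    intro i j hij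
    rw [Set.Ioc_disjoint_Ioc]
    refine le_trans (min_le_right _ _) (le_trans ?_ (le_max_left _ _))
    exact gp_anti_k hN (le_refl (0:ℝ)) (Nat.succ_le_of_lt hij)
  intro i j hij
  rcases lt_or_gt_of_ne hij with h | h
  · exact key i j h
  · exact (key j i h).symm

lemma subst_k {N : ℕ} (hN : 1 ≤ N) {f : ℝ → ℂ}
    (hf : eVariationOn f (Icc (0:ℝ) 1) ≠ ⊤) (k : ℕ) :
    ∫ x in Icc (0:ℝ) 1, ((x+(N:ℝ)+k)*((x+(N:ℝ)+k)+1))⁻¹ • f (gp N k x)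
      = ∫ y in Ioc (gp N (k+1) 0) (gp N k 0), (y+(N:ℝ))⁻¹ • f y := by
  have hNp : (1:ℝ) ≤ N := Ncast_pos hN
  have hderiv : ∀ x ∈ Ico (0:ℝ) 1,
      HasDerivWithinAt (gp N k) (-(N:ℝ)/((x+(N:ℝ)+k)^2)) (Ico (0:ℝ) 1) x :=
    fun x hx => (gp_hasDeriv hN k hx.1).hasDerivWithinAt
  have hkey := integral_image_eq_integral_abs_deriv_smul measurableSet_Ico hderiv
    (gp_injOn hN k) (fun y => (y+(N:ℝ))⁻¹ • f y)
  rw [gp_image hN k] at hkey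
  rw [integral_Icc_eq_integral_Ico, hkey]
  apply setIntegral_congr_fun measurableSet_Ico
  intro x hx
  have hd := den_pos hN hx.1 k
  have habs : |(-(N:ℝ)/((x+(N:ℝ)+k)^2))| = (N:ℝ)/((x+(N:ℝ)+k)^2) := by
    rw [neg_div, abs_neg, abs_of_nonneg (by positivity)]
  dsimp only
  rw [habs, smul_smul]
  congr 1
  simp only [gp]
  have hgpN : (0:ℝ) < (N:ℝ)/(x+(N:ℝ)+k) + N := by positivity
  field_simp
  ring

lemma core_invariance {N : ℕ} (hN : 1 ≤ N) {f : ℝ → ℂ}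
    (hf : eVariationOn f (Icc (0:ℝ) 1) ≠ ⊤) :
    ∫ x in Icc (0:ℝ) 1, (x+(N:ℝ))⁻¹ • Uop N f x
      = ∫ x in Icc (0:ℝ) 1, (x+(N:ℝ))⁻¹ • f x := by
  have hNp : (1:ℝ) ≤ N := Ncast_pos hN
  set Mf := ‖f 1‖ + (eVariationOn f (Icc (0:ℝ) 1)).toReal with hMf_def
  have hMf : ∀ x ∈ Icc (0:ℝ) 1, ‖f x‖ ≤ Mf := fun x hx => norm_le_of_BV hf hx
  have hMf0 : 0 ≤ Mf := le_trans (norm_nonneg _) (hMf 1 ⟨zero_le_one, le_refl _⟩)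
  set h : ℕ → ℝ → ℂ := fun k x => ((x+(N:ℝ)+k)*((x+(N:ℝ)+k)+1))⁻¹ • f (gp N k x)
    with hh_def
  -- pointwise identity on Icc
  have hpt : ∀ x ∈ Icc (0:ℝ) 1, (x+(N:ℝ))⁻¹ • Uop N f x = ∑' k : ℕ, h k x := by
    intro x hx
    have hsum := summable_term hN hx.1 hMf
    have hU : Uop N f x = ∑' k : ℕ, Vr N k x • f (gp N k x) := congrFun (Uop_eq_UE N f) x
    rw [hU]
    have hhs := (hsum.hasSum.const_smul ((x+(N:ℝ))⁻¹)).tsum_eq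
    rw [← hhs]
    apply tsum_congr
    intro k
    rw [smul_smul]
    show ((x+(N:ℝ))⁻¹ * Vr N k x) • f (gp N k x) = _
    congr 1
    simp only [Vr]
    have hd := den_pos hN hx.1 k
    have hxN : (0:ℝ) < x + N := num_pos hN hx.1
    field_simp
  -- measurability of each piece
  have hmeasD : ∀ k : ℕ, Measurable fun x : ℝ => ((x+(N:ℝ)+k)*((x+(N:ℝ)+k)+1))⁻¹ := by
    intro k
    exact (((measurable_id.add_const ((N:ℝ))).add_const ((k:ℝ))).mul
      (((measurable_id.add_const ((N:ℝ))).add_const ((k:ℝ))).add_const 1)).inv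
  have hmeas : ∀ k : ℕ, AEStronglyMeasurable (h k) (volume.restrict (Icc (0:ℝ) 1)) := by
    intro k
    exact ((hmeasD k).aemeasurable.smul (aemeasurable_comp_of_BV hN hf k)).aestronglyMeasurable
  -- bound on lintegrals
  have hDk0 : ∀ k : ℕ, (0:ℝ) < ((N:ℝ)+k)*(((N:ℝ)+k)+1) := by
    intro k
    have : (0:ℝ) ≤ k := Nat.cast_nonneg k
    nlinarith
  have hbd : ∀ k : ℕ, ∀ x ∈ Icc (0:ℝ) 1, ‖h k x‖ ≤ Mf * (((N:ℝ)+k)*(((N:ℝ)+k)+1))⁻¹ := by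
    intro k x hx
    have hd := den_pos hN hx.1 k
    have hD : ((x+(N:ℝ)+k)*((x+(N:ℝ)+k)+1))⁻¹ ≤ (((N:ℝ)+k)*(((N:ℝ)+k)+1))⁻¹ := by
      apply inv_anti₀ (hDk0 k)
      nlinarith [hx.1]
    have hDpos : (0:ℝ) < ((x+(N:ℝ)+k)*((x+(N:ℝ)+k)+1)) := by nlinarith
    rw [hh_def]
    dsimp only
    rw [norm_smul, Real.norm_eq_abs, abs_of_nonneg (by positivity)]
    calc ((x+(N:ℝ)+k)*((x+(N:ℝ)+k)+1))⁻¹ * ‖f (gp N k x)‖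
        ≤ (((N:ℝ)+k)*(((N:ℝ)+k)+1))⁻¹ * Mf :=
          mul_le_mul hD (hMf _ (gp_mem hN hx.1 k)) (norm_nonneg _) (by positivity)
      _ = Mf * (((N:ℝ)+k)*(((N:ℝ)+k)+1))⁻¹ := mul_comm _ _
  have hsumD : Summable (fun k : ℕ => Mf * (((N:ℝ)+k)*(((N:ℝ)+k)+1))⁻¹) := by
    have heq : (fun k : ℕ => Mf * (((N:ℝ)+k)*(((N:ℝ)+k)+1))⁻¹)
        = fun k : ℕ => (Mf * (N:ℝ)⁻¹) * Vr N k 0 := by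
      funext k
      simp only [Vr]
      have := hDk0 k
      field_simp
      ring
    rw [heq]
    exact (summable_Vr hN (le_refl _)).mul_left _
  have hlint : ∑' k : ℕ, ∫⁻ x, ‖h k x‖₊ ∂(volume.restrict (Icc (0:ℝ) 1)) ≠ ⊤ := by
    have hle : ∀ k : ℕ, ∫⁻ x, ‖h k x‖₊ ∂(volume.restrict (Icc (0:ℝ) 1))
        ≤ ENNReal.ofReal (Mf * (((N:ℝ)+k)*(((N:ℝ)+k)+1))⁻¹) := by
      intro k
      have : ∫⁻ x, ‖h k x‖₊ ∂(volume.restrict (Icc (0:ℝ) 1))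
          ≤ ∫⁻ _ , ENNReal.ofReal (Mf * (((N:ℝ)+k)*(((N:ℝ)+k)+1))⁻¹)
            ∂(volume.restrict (Icc (0:ℝ) 1)) := by
        apply lintegral_mono_ae
        filter_upwards [ae_restrict_mem measurableSet_Icc] with x hx
        rw [← enorm_eq_nnnorm, ← ofReal_norm]
        exact ENNReal.ofReal_le_ofReal (hbd k x hx)
      refine le_trans this ?_
      rw [lintegral_const, Measure.restrict_apply_univ, Real.volume_Icc]
      norm_num
    refine ne_top_of_le_ne_top ?_ (ENNReal.tsum_le_tsum hle)
    rw [← ENNReal.ofReal_tsum_of_nonneg (fun k => by positivity) hsumD]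
    exact ENNReal.ofReal_ne_top
  -- interchange
  have hLHS : ∫ x in Icc (0:ℝ) 1, (x+(N:ℝ))⁻¹ • Uop N f x
      = ∑' k : ℕ, ∫ x in Icc (0:ℝ) 1, h k x := by
    rw [← integral_tsum hmeas hlint]
    apply integral_congr_ae
    filter_upwards [ae_restrict_mem measurableSet_Icc] with x hx
    exact hpt x hx
  rw [hLHS]
  -- substitute each k
  have hsub : ∀ k : ℕ, ∫ x in Icc (0:ℝ) 1, h k x
      = ∫ y in Ioc (gp N (k+1) 0) (gp N k 0), (y+(N:ℝ))⁻¹ • f y :=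
    fun k => subst_k hN hf k
  simp only [hh_def]
  rw [tsum_congr hsub]
  -- reassemble the union
  have hG : IntegrableOn (fun y => (y+(N:ℝ))⁻¹ • f y) (Icc (0:ℝ) 1) volume := by
    apply integrableOn_of_bounded_aemeas (M := Mf)
      ((measurable_id.add_const ((N:ℝ))).inv.aemeasurable.smul (aemeasurable_of_BV hf))
    intro x hx
    show ‖(x+(N:ℝ))⁻¹ • f x‖ ≤ Mf
    rw [norm_smul, Real.norm_eq_abs]
    have h1 : (0:ℝ) ≤ x := hx.1
    have hpos : (0:ℝ) < x + N := by linarith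
    have : |(x+(N:ℝ))⁻¹| ≤ 1 := by
      rw [abs_of_nonneg (by positivity)]
      rw [inv_le_one_iff₀]
      right; linarith
    calc |(x+(N:ℝ))⁻¹| * ‖f x‖ ≤ 1 * Mf :=
        mul_le_mul this (hMf x hx) (norm_nonneg _) zero_le_one
      _ = Mf := one_mul _
  have hGu : IntegrableOn (fun y => (y+(N:ℝ))⁻¹ • f y)
      (⋃ k : ℕ, Ioc (gp N (k+1) 0) (gp N k 0)) volume := by
    rw [iUnion_Ioc_gp hN]
    exact hG.mono_set Ioc_subset_Icc_self
  have := integral_iUnion (fun k : ℕ => measurableSet_Ioc)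
    (pairwise_disj_gp hN) hGu
  rw [← this, iUnion_Ioc_gp hN, ← integral_Icc_eq_integral_Ioc]

lemma invariance {N : ℕ} (hN : 1 ≤ N) {f : ℝ → ℂ}
    (hf : eVariationOn f (Icc (0:ℝ) 1) ≠ ⊤) :
    ∫ x, Uop N f x ∂(GN N) = ∫ x, f x ∂(GN N) := by
  rw [integral_GN hN, integral_GN hN]
  set L := Real.log (((N:ℝ)+1)/N) with hL_def
  have hfac : ∀ (g : ℝ → ℂ), (∫ x in Icc (0:ℝ) 1, (L⁻¹ * (x+(N:ℝ))⁻¹) • g x)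
      = L⁻¹ • ∫ x in Icc (0:ℝ) 1, (x+(N:ℝ))⁻¹ • g x := by
    intro g
    rw [← integral_smul]
    apply integral_congr_ae
    apply Filter.Eventually.of_forall
    intro x
    exact mul_smul _ _ _
  rw [hfac, hfac, core_invariance hN hf]

end Meas

end GKW

/-- For every function `f : I → ℂ` of bounded variation and every `n ≥ 0`:
(i) `var(Uⁿf) ≤ (1/(N+1)ⁿ) var(f)`, and
(ii) `sup_{s ∈ I} |(Uⁿf)(s) − ∫_I f dG_N| ≤ (1/(N+1)ⁿ) var(f)`. -/
theorem var_Uop_iterate (N : ℕ) (hN : 1 ≤ N) (f : ℝ → ℂ)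
    (hf : eVariationOn f (Icc (0:ℝ) 1) ≠ ⊤) (n : ℕ) :
    eVariationOn ((Uop N)^[n] f) (Icc (0:ℝ) 1) ≤
        (((N : ℝ≥0∞) + 1) ^ n)⁻¹ * eVariationOn f (Icc (0:ℝ) 1) ∧
      ∀ s ∈ Icc (0:ℝ) 1,
        ‖(Uop N)^[n] f s - ∫ x, f x ∂(GN N)‖ ≤
          (1 / ((N : ℝ) + 1) ^ n) * (eVariationOn f (Icc (0:ℝ) 1)).toReal := by
  have hpos : (0:ℝ≥0∞) < (N:ℝ≥0∞)+1 := lt_of_lt_of_le zero_lt_one le_add_self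
  have hpow0 : ∀ m : ℕ, ((N:ℝ≥0∞)+1)^m ≠ 0 := fun m => pow_ne_zero m hpos.ne'
  have hne : ∀ m : ℕ, (((N : ℝ≥0∞) + 1) ^ m)⁻¹ * eVariationOn f (Icc (0:ℝ) 1) ≠ ⊤ :=
    fun m => ENNReal.mul_ne_top (ENNReal.inv_ne_top.mpr (hpow0 m)) hf
  have hpart1 : ∀ m : ℕ, eVariationOn ((Uop N)^[m] f) (Icc (0:ℝ) 1)
      ≤ (((N : ℝ≥0∞) + 1) ^ m)⁻¹ * eVariationOn f (Icc (0:ℝ) 1) := by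
    intro m
    induction m with
    | zero => simp
    | succ m ih =>
      have hgne : eVariationOn ((Uop N)^[m] f) (Icc (0:ℝ) 1) ≠ ⊤ :=
        ne_top_of_le_ne_top (hne m) ih
      rw [Function.iterate_succ_apply']
      calc eVariationOn (Uop N ((Uop N)^[m] f)) (Icc (0:ℝ) 1)
          ≤ ((N:ℝ≥0∞)+1)⁻¹ * eVariationOn ((Uop N)^[m] f) (Icc (0:ℝ) 1) :=
            GKW.step_var hN hgne
        _ ≤ ((N:ℝ≥0∞)+1)⁻¹ * ((((N : ℝ≥0∞) + 1) ^ m)⁻¹ * eVariationOn f (Icc (0:ℝ) 1)) :=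
            mul_le_mul_right ih _
        _ = (((N : ℝ≥0∞) + 1) ^ (m+1))⁻¹ * eVariationOn f (Icc (0:ℝ) 1) := by
            rw [← mul_assoc, ← ENNReal.mul_inv (Or.inl hpos.ne')
              (Or.inl (by simp : ((N:ℝ≥0∞)+1) ≠ ⊤)), ← pow_succ']
  have hiter_ne : ∀ m : ℕ, eVariationOn ((Uop N)^[m] f) (Icc (0:ℝ) 1) ≠ ⊤ :=
    fun m => ne_top_of_le_ne_top (hne m) (hpart1 m)
  have hinvar : ∀ m : ℕ, ∫ x, (Uop N)^[m] f x ∂(GN N) = ∫ x, f x ∂(GN N) := by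
    intro m
    induction m with
    | zero => rfl
    | succ m ih =>
      rw [Function.iterate_succ_apply']
      rw [GKW.invariance hN (hiter_ne m), ih]
  refine ⟨hpart1 n, ?_⟩
  intro s hs
  set g := (Uop N)^[n] f with hg_def
  have hgvar := hiter_ne n
  haveI := GKW.GN_prob hN
  have hMg : ∀ x ∈ Icc (0:ℝ) 1, ‖g x‖ ≤ ‖g 1‖ + (eVariationOn g (Icc (0:ℝ) 1)).toReal :=
    fun x hx => GKW.norm_le_of_BV hgvar hx
  have hac : GN N ≪ volume.restrict (Icc (0:ℝ) 1) := by
    rw [GN]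
    exact withDensity_absolutelyContinuous _ _
  have haemeas : AEMeasurable g (GN N) := (GKW.aemeasurable_of_BV hgvar).mono_ac hac
  have haeIcc : ∀ᵐ x ∂(GN N), x ∈ Icc (0:ℝ) 1 := by
    rw [ae_iff]
    have hc : {x : ℝ | ¬ x ∈ Icc (0:ℝ) 1} = (Icc (0:ℝ) 1)ᶜ := rfl
    rw [hc]
    apply hac
    rw [Measure.restrict_apply measurableSet_Icc.compl]
    simp
  have hint : Integrable g (GN N) := by
    apply Integrable.mono'
      (integrable_const (‖g 1‖ + (eVariationOn g (Icc (0:ℝ) 1)).toReal))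
      haemeas.aestronglyMeasurable
    filter_upwards [haeIcc] with x hx
    exact hMg x hx
  have hconst : ∫ _x, g s ∂(GN N) = g s := by
    rw [integral_const, probReal_univ]
    simp
  have key : ∫ x, (g s - g x) ∂(GN N) = g s - ∫ x, g x ∂(GN N) := by
    rw [integral_sub (integrable_const _) hint, hconst]
  have hgs : ‖g s - ∫ x, f x ∂(GN N)‖ ≤ (eVariationOn g (Icc (0:ℝ) 1)).toReal := by
    rw [← hinvar n, ← hg_def, ← key]
    have hb : ∀ᵐ x ∂(GN N), ‖g s - g x‖ ≤ (eVariationOn g (Icc (0:ℝ) 1)).toReal := by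
      filter_upwards [haeIcc] with x hx
      rw [← dist_eq_norm, dist_edist]
      exact ENNReal.toReal_mono hgvar (eVariationOn.edist_le g hs hx)
    have hres := norm_integral_le_of_norm_le_const (μ := GN N) hb
    rwa [probReal_univ, mul_one] at hres
  refine le_trans hgs ?_
  have h1 : (eVariationOn g (Icc (0:ℝ) 1)).toReal
      ≤ ((((N : ℝ≥0∞) + 1) ^ n)⁻¹ * eVariationOn f (Icc (0:ℝ) 1)).toReal :=
    ENNReal.toReal_mono (hne n) (hpart1 n)
  refine le_trans h1 (le_of_eq ?_)
  rw [ENNReal.toReal_mul, ENNReal.toReal_inv, ENNReal.toReal_pow]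
  have hNt : ((N:ℝ≥0∞)+1).toReal = (N:ℝ)+1 := by
    rw [ENNReal.toReal_add (by simp) ENNReal.one_ne_top]
    simp
  rw [hNt, one_div]
end

section
/- Define q̃_{−1}=0, q̃_0=1 and q̃_k = N(q̃_{k−1}+q̃_{k−2}) for k ≥ 1, and set v_{N(n)}(1) = (1+N)·N^{n+1}/(q̃_{n+1}·q̃_{n+2}). Then for every n ≥ 0, q̃_n = (1/√(N²+4N))·( ((N+√(N²+4N))/2)^{n+1} − ((N−√(N²+4N))/2)^{n+1} ), and lim_{n→∞} ((1/2)·v_{N(n)}(1))^{1/n} = 2/(N + √(N²+4N) + 2). -/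
open MeasureTheory Set Filter
open scoped Classical Topology ENNReal

set_option maxHeartbeats 1000000 in
/-- Closed form for `q̃_n` and the limit
`lim_{n→∞} ((1/2) v_{N(n)}(1))^{1/n} = 2/(N + √(N²+4N) + 2)`, where
`v_{N(n)}(1) = (1+N) N^{n+1}/(q̃_{n+1} q̃_{n+2})`. -/
theorem qt_closed_form_and_rate (N : ℕ) (hN : 1 ≤ N) :
    (∀ n : ℕ, qt N (n+1) =
        (Real.sqrt ((N : ℝ)^2 + 4*N))⁻¹ *
          ((((N : ℝ) + Real.sqrt ((N : ℝ)^2 + 4*N)) / 2) ^ (n+1)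
            - (((N : ℝ) - Real.sqrt ((N : ℝ)^2 + 4*N)) / 2) ^ (n+1))) ∧
    Tendsto
      (fun n : ℕ =>
        ((1/2) * ((1 + N) * (N : ℝ) ^ (n+1) / (qt N (n+2) * qt N (n+3)))) ^ ((n : ℝ)⁻¹))
      atTop (𝓝 (2 / ((N : ℝ) + Real.sqrt ((N : ℝ)^2 + 4*N) + 2))) := by
  have hNpos : (0:ℝ) < N := by exact_mod_cast hN
  set D := Real.sqrt ((N : ℝ)^2 + 4*N) with hDdef
  have hDsq : D^2 = (N:ℝ)^2 + 4*N := Real.sq_sqrt (by positivity)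
  have hDpos : 0 < D := Real.sqrt_pos.2 (by positivity)
  have hDgtN : (N:ℝ) < D := by nlinarith
  set φ : ℝ := ((N:ℝ) + D)/2 with hφdef
  set ψ : ℝ := ((N:ℝ) - D)/2 with hψdef
  clear_value D
  have hφpos : 0 < φ := by rw [hφdef]; positivity
  have hφne : φ ≠ 0 := hφpos.ne'
  have hφsq : φ^2 = N*φ + N := by rw [hφdef]; field_simp; nlinarith
  have hψsq : ψ^2 = N*ψ + N := by rw [hψdef]; field_simp; nlinarith
  have hψneg : ψ < 0 := by rw [hψdef]; linarith
  have hφψsub : φ - ψ = D := by rw [hφdef, hψdef]; ring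
  have hφplus : φ + 1 = ((N:ℝ) + D + 2)/2 := by rw [hφdef]; ring
  clear_value φ ψ
  have hclosed : ∀ n : ℕ, qt N (n+1) = D⁻¹ * (φ^(n+1) - ψ^(n+1)) := by
    intro n
    induction n using Nat.twoStepInduction with
    | zero =>
      show (1:ℝ) = D⁻¹ * (φ^1 - ψ^1)
      rw [pow_one, pow_one, hφψsub]
      field_simp
    | one =>
      have : qt N 2 = (N:ℝ) * (1 + 0) := rfl
      rw [this, hφsq, hψsq]
      have : (N:ℝ)*φ + N - (N*ψ + N) = N * (φ - ψ) := by ring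
      rw [this, hφψsub]
      field_simp
      norm_num
    | more n ih2 ih1 =>
      have hstep : qt N (n+3) = (N:ℝ) * (qt N (n+2) + qt N (n+1)) := rfl
      rw [hstep, ih1, ih2]
      have h1 : φ^(n+3) = (N*φ + N) * φ^(n+1) := by rw [← hφsq]; ring
      have h2 : ψ^(n+3) = (N*ψ + N) * ψ^(n+1) := by rw [← hψsq]; ring
      rw [h1, h2]
      ring
  refine ⟨hclosed, ?_⟩
  -- setup for the limit
  set r : ℝ := ψ / φ with hrdef
  have hrabs : |r| < 1 := by
    rw [hrdef, abs_div, abs_of_pos hφpos, div_lt_one hφpos, abs_of_neg hψneg]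
    rw [hψdef, hφdef]; linarith
  clear_value r
  have hrpow : ∀ k : ℕ, 1 ≤ k → 0 < (1:ℝ) - r^k := by
    intro k hk
    have h1 : |r^k| < 1 := by
      rw [abs_pow]
      calc |r|^k ≤ |r|^1 := pow_le_pow_of_le_one (abs_nonneg r) hrabs.le hk
      _ = |r| := pow_one _
      _ < 1 := hrabs
    have := (abs_lt.mp h1).2
    linarith
  set L : ℝ := (N:ℝ) / φ^2 with hLdef
  have hLpos : 0 < L := by rw [hLdef]; positivity
  have hLeq : L = 2 / ((N : ℝ) + D + 2) := by
    rw [hLdef, hφsq]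
    have h1 : (N:ℝ)*φ + N = N * (φ + 1) := by ring
    rw [h1, hφplus]
    rw [div_eq_div_iff (by positivity) (by positivity)]
    ring
  set c0 : ℝ := (1/2) * (1 + (N:ℝ)) * N * D^2 / φ^5 with hc0def
  have hc0pos : 0 < c0 := by rw [hc0def]; positivity
  set b : ℕ → ℝ := fun n => c0 / ((1 - r^(n+2)) * (1 - r^(n+3))) with hbdef
  have hbpos : ∀ n : ℕ, 0 < b n := by
    intro n
    have h2 := hrpow (n+2) (by omega)
    have h3 := hrpow (n+3) (by omega)
    rw [hbdef]
    positivity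
  have hab : ∀ n : ℕ,
      (1/2) * ((1 + N) * (N : ℝ) ^ (n+1) / (qt N (n+2) * qt N (n+3))) = b n * L^n := by
    intro n
    rw [hclosed (n+1), hclosed (n+2)]
    have e1 : φ^(n+2) - ψ^(n+2) = φ^(n+2) * (1 - r^(n+2)) := by
      rw [hrdef, div_pow, mul_sub, mul_one,
        mul_div_cancel₀ _ (pow_ne_zero _ hφne)]
    have e2 : φ^(n+3) - ψ^(n+3) = φ^(n+3) * (1 - r^(n+3)) := by
      rw [hrdef, div_pow, mul_sub, mul_one,
        mul_div_cancel₀ _ (pow_ne_zero _ hφne)]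
    rw [e1, e2, hbdef, hLdef, hc0def]
    have h2 := (hrpow (n+2) (by omega)).ne'
    have h3 := (hrpow (n+3) (by omega)).ne'
    have hDne := hDpos.ne'
    have hNne := hNpos.ne'
    rw [div_pow]
    field_simp
    ring
  have hbtend : Tendsto b atTop (𝓝 c0) := by
    have hr0 : Tendsto (fun n : ℕ => r^n) atTop (𝓝 0) :=
      tendsto_pow_atTop_nhds_zero_of_abs_lt_one hrabs
    have h2 : Tendsto (fun n : ℕ => (1:ℝ) - r^(n+2)) atTop (𝓝 1) := by
      have := (tendsto_const_nhds (x := (1:ℝ)) (f := atTop)).sub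
        (hr0.comp (tendsto_add_atTop_nat 2))
      simpa using this
    have h3 : Tendsto (fun n : ℕ => (1:ℝ) - r^(n+3)) atTop (𝓝 1) := by
      have := (tendsto_const_nhds (x := (1:ℝ)) (f := atTop)).sub
        (hr0.comp (tendsto_add_atTop_nat 3))
      simpa using this
    have := (tendsto_const_nhds (x := c0) (f := atTop)).div (h2.mul h3) (by norm_num)
    simpa [hbdef, Pi.div_def] using this
  -- (b n)^(1/n) → 1
  have hb1 : Tendsto (fun n : ℕ => (b n) ^ ((n:ℝ)⁻¹)) atTop (𝓝 1) := by
    have hlog : Tendsto (fun n : ℕ => Real.log (b n)) atTop (𝓝 (Real.log c0)) :=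
      ((Real.continuousAt_log hc0pos.ne').tendsto).comp hbtend
    have hmul : Tendsto (fun n : ℕ => Real.log (b n) * (n:ℝ)⁻¹) atTop (𝓝 0) := by
      have := hlog.mul tendsto_inv_atTop_nhds_zero_nat
      simpa using this
    have hexp := (Real.continuous_exp.tendsto 0).comp hmul
    rw [Real.exp_zero] at hexp
    refine hexp.congr fun n => ?_
    simp only [Function.comp]
    rw [← Real.rpow_def_of_pos (hbpos n)]
  -- main limit
  have hmain : Tendsto (fun n : ℕ => (b n) ^ ((n:ℝ)⁻¹) * L) atTop (𝓝 L) := by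
    have := hb1.mul (tendsto_const_nhds (x := L) (f := atTop))
    simpa using this
  rw [hLeq] at hmain
  refine hmain.congr' ?_
  filter_upwards [eventually_ge_atTop 1] with n hn
  have hnne : (n:ℝ) ≠ 0 := by positivity
  rw [hab n, Real.mul_rpow (hbpos n).le (by positivity),
    ← Real.rpow_natCast L n, ← Real.rpow_mul hLpos.le, mul_inv_cancel₀ hnne,
    Real.rpow_one, hLeq]
end
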